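/- arXiv:2012.04106 — 3 statements merged into one kernel-verified Lean document; each statement's English description precedes it below -/
import Mathlib

section
/- For every α = (α_1, …, α_{n−1}) ∈ k^{n−1}, the linear map λ_α : H_{2^n} → k determined on the canonical basis B by λ_α(1) = 1, λ_α(x_i) = λ_α(g x_i) = α_i for all i ∈ {1, …, n−1}, and λ_α = 0 on all other elements of B, is a partial action of the Nichols Hopf algebra H_{2^n} on k. (Proposition 4.1.1) -/
open scoped TensorProduct

/-- The linear map `h ↦ Σ λ(h₁) h₂` (Sweedler notation). -/
noncomputable def lCont (k H : Type*) [CommSemiring k] [Semiring H] [Bialgebra k H]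
    (lam : H →ₗ[k] k) : H →ₗ[k] H :=
  (TensorProduct.lid k H).toLinearMap ∘ₗ TensorProduct.map lam LinearMap.id ∘ₗ Coalgebra.comul

/-- The linear map `h ↦ Σ h₁ λ(h₂)` (Sweedler notation). -/
noncomputable def rCont (k H : Type*) [CommSemiring k] [Semiring H] [Bialgebra k H]
    (lam : H →ₗ[k] k) : H →ₗ[k] H :=
  (TensorProduct.rid k H).toLinearMap ∘ₗ TensorProduct.map LinearMap.id lam ∘ₗ Coalgebra.comul

/-- A partial action of a bialgebra `H` on its base field `k`: a linear map `λ : H → k` with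
`λ(1) = 1` and `λ(h)λ(y) = Σ λ(h₁)λ(h₂y)` for all `h, y ∈ H`; by linearity the right-hand side
is `λ((Σ λ(h₁) h₂) · y)`. -/
def IsPartialAction (k H : Type*) [CommSemiring k] [Semiring H] [Bialgebra k H]
    (lam : H →ₗ[k] k) : Prop :=
  lam 1 = 1 ∧ ∀ h y : H, lam h * lam y = lam (lCont k H lam h * y)

/-- A symmetric partial action additionally satisfies `λ(h)λ(y) = Σ λ(h₁y)λ(h₂)`, i.e.
`λ(h)λ(y) = λ((Σ h₁ λ(h₂)) · y)`. -/
def IsSymmPartialAction (k H : Type*) [CommSemiring k] [Semiring H] [Bialgebra k H]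
    (lam : H →ₗ[k] k) : Prop :=
  IsPartialAction k H lam ∧ ∀ h y : H, lam h * lam y = lam (rCont k H lam h * y)

/-- A realization of the Nichols Hopf algebra `H_{2^n}`: a Hopf algebra `H` over `k` (with
`char k ≠ 2`) generated by `g, x_1, …, x_{n−1}` with `g² = 1`, `x_i² = 0`, `x_i g = −g x_i`,
`x_i x_j = −x_j x_i`, such that the products `g^{j₀} x_1^{j₁} ⋯ x_{n−1}^{j_{n−1}}`
(`j_t ∈ {0,1}`) form a `k`-basis, `g` is group-like and each `x_i` is `(1,g)`-primitive. -/
structure NicholsData (k : Type*) [Field k] (n : ℕ) (H : Type*)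
    [Ring H] [HopfAlgebra k H] where
  g : H
  x : Fin (n - 1) → H
  g_sq : g ^ 2 = 1
  x_sq : ∀ i, x i ^ 2 = 0
  x_mul_g : ∀ i, x i * g = -(g * x i)
  x_mul_x : ∀ i j, x i * x j = -(x j * x i)
  basis : Module.Basis (Fin 2 × (Fin (n - 1) → Fin 2)) k H
  basis_eq : ∀ p : Fin 2 × (Fin (n - 1) → Fin 2),
    basis p = g ^ (p.1 : ℕ) *
      ((List.finRange (n - 1)).map (fun i => x i ^ ((p.2 i : ℕ)))).prod
  comul_g : Coalgebra.comul (R := k) g = g ⊗ₜ[k] g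
  comul_x : ∀ i, Coalgebra.comul (R := k) (x i) = x i ⊗ₜ[k] (1 : H) + g ⊗ₜ[k] x i
  counit_g : Coalgebra.counit (R := k) g = 1
  counit_x : ∀ i, Coalgebra.counit (R := k) (x i) = 0

namespace NPAux

lemma fin2_em (a : Fin 2) : a = 0 ∨ a = 1 := by fin_cases a <;> simp

lemma fin2_val_ite (a : Fin 2) : (a : ℕ) = if a = 1 then 1 else 0 := by
  fin_cases a <;> rfl

variable {m : ℕ}

/-- delta vector -/
def dlt (i : Fin m) : Fin m → Fin 2 := Function.update (fun _ => 0) i 1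

lemma deg_eq_card (r : Fin m → Fin 2) :
    ∑ i, ((r i : ℕ)) = (Finset.univ.filter (fun i => r i = 1)).card := by
  rw [Finset.card_filter]
  exact Finset.sum_congr rfl fun i _ => fin2_val_ite _

lemma deg_zero {r : Fin m → Fin 2} (h : ∑ i, ((r i : ℕ)) = 0) : r = fun _ => 0 := by
  funext t
  have h2 := Finset.sum_eq_zero_iff.mp h t (Finset.mem_univ t)
  rcases fin2_em (r t) with h0 | h1
  · exact h0
  · rw [h1] at h2; simp at h2

lemma deg_one {r : Fin m → Fin 2} (h : ∑ i, ((r i : ℕ)) = 1) :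
    ∃ i, r = dlt i := by
  rw [deg_eq_card] at h
  obtain ⟨i, hi⟩ := Finset.card_eq_one.mp h
  refine ⟨i, funext fun t => ?_⟩
  unfold dlt
  by_cases ht : t = i
  · subst ht
    rw [Function.update_self]
    have : t ∈ Finset.univ.filter (fun i => r i = 1) := hi ▸ Finset.mem_singleton_self t
    exact (Finset.mem_filter.mp this).2
  · rw [Function.update_of_ne ht]
    rcases fin2_em (r t) with h0 | h1
    · exact h0
    · exfalso
      have : t ∈ Finset.univ.filter (fun i => r i = 1) := Finset.mem_filter.mpr ⟨Finset.mem_univ _, h1⟩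
      rw [hi, Finset.mem_singleton] at this
      exact ht this

lemma deg_two {r : Fin m → Fin 2} (h : ∑ i, ((r i : ℕ)) = 2) :
    ∃ i j, i < j ∧ r = Function.update (dlt j) i 1 := by
  rw [deg_eq_card] at h
  obtain ⟨a, b, hab, hs⟩ := Finset.card_eq_two.mp h
  have key : ∀ a b : Fin m, a < b →
      Finset.univ.filter (fun i => r i = 1) = {a, b} →
      r = Function.update (dlt b) a 1 := by
    intro a b hab hs
    funext t
    by_cases hta : t = a
    · subst hta
      rw [Function.update_self]
      have : t ∈ ({t, b} : Finset (Fin m)) := Finset.mem_insert_self _ _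
      rw [← hs, Finset.mem_filter] at this
      exact this.2
    · rw [Function.update_of_ne hta]
      unfold dlt
      by_cases htb : t = b
      · subst htb
        rw [Function.update_self]
        have : t ∈ ({a, t} : Finset (Fin m)) := Finset.mem_insert_of_mem (Finset.mem_singleton_self _)
        rw [← hs, Finset.mem_filter] at this
        exact this.2
      · rw [Function.update_of_ne htb]
        rcases fin2_em (r t) with h0 | h1
        · exact h0
        · exfalso
          have : t ∈ ({a, b} : Finset (Fin m)) := by
            rw [← hs, Finset.mem_filter]; exact ⟨Finset.mem_univ _, h1⟩
          rcases Finset.mem_insert.mp this with h' | h'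
          · exact hta h'
          · exact htb (Finset.mem_singleton.mp h')
  rcases hab.lt_or_gt with hlt | hlt
  · exact ⟨a, b, hlt, key a b hlt hs⟩
  · exact ⟨b, a, hlt, key b a hlt (by rw [hs, Finset.pair_comm])⟩

lemma deg_update {r : Fin m → Fin 2} {i : Fin m} (h : r i = 0) :
    ∑ t, ((Function.update r i 1 t : ℕ)) = (∑ t, ((r t : ℕ))) + 1 := by
  rw [deg_eq_card, deg_eq_card]
  have hset : Finset.univ.filter (fun t => Function.update r i 1 t = 1)
      = insert i (Finset.univ.filter (fun t => r t = 1)) := by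
    ext t
    simp only [Finset.mem_filter, Finset.mem_insert, Finset.mem_univ, true_and]
    by_cases ht : t = i
    · subst ht; simp [Function.update_self]
    · simp [Function.update_of_ne ht, ht]
  rw [hset, Finset.card_insert_of_notMem (by simp [h])]

lemma deg_zero_fun : (∑ t : Fin m, (((fun _ => (0 : Fin 2)) t : ℕ))) = 0 := by simp

lemma deg_dlt (i : Fin m) : ∑ t, ((dlt i t : ℕ)) = 1 := by
  unfold dlt
  rw [deg_update rfl]
  simp

lemma dlt_apply_ne (i t : Fin m) (h : t ≠ i) : dlt i t = 0 := Function.update_of_ne h _ _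

lemma dlt_apply_self (i : Fin m) : dlt i i = 1 := Function.update_self _ _ _

/-- split finRange at i -/
lemma split_finRange (i : Fin m) : ∃ L₁ L₂ : List (Fin m),
    List.finRange m = L₁ ++ i :: L₂ ∧ (∀ t ∈ L₁, t < i) ∧ ∀ t ∈ L₂, i < t := by
  obtain ⟨L₁, L₂, h⟩ := List.append_of_mem (List.mem_finRange i)
  have hp := List.pairwise_lt_finRange m
  rw [h, List.pairwise_append] at hp
  refine ⟨L₁, L₂, h, fun t ht => hp.2.2 t ht i List.mem_cons_self, ?_⟩
  exact (List.pairwise_cons.mp hp.2.1).1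


variable {k H : Type*} [Field k] [Ring H] [HopfAlgebra k H] {n : ℕ}

/-- the x-monomial with exponent vector r -/
def Xr (N : NicholsData k n H) (r : Fin (n - 1) → Fin 2) : H :=
  ((List.finRange (n - 1)).map (fun i => N.x i ^ ((r i : ℕ)))).prod

lemma basis_eq' (N : NicholsData k n H) (l : Fin 2) (r : Fin (n-1) → Fin 2) :
    N.basis (l, r) = N.g ^ (l : ℕ) * Xr N r := N.basis_eq (l, r)

lemma g_mul_g (N : NicholsData k n H) : N.g * N.g = 1 := by
  have h := N.g_sq; rwa [pow_two] at h

lemma x_mul_gpow (N : NicholsData k n H) (i : Fin (n-1)) (l : Fin 2) :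
    N.x i * N.g ^ (l : ℕ) = ((-1 : k) ^ (l : ℕ)) • (N.g ^ (l : ℕ) * N.x i) := by
  rcases fin2_em l with rfl | rfl
  · simp
  · rw [Fin.val_one, pow_one, pow_one, N.x_mul_g i, neg_one_smul]

lemma x_mul_xpow (N : NicholsData k n H) (i a : Fin (n-1)) (e : Fin 2) :
    N.x i * N.x a ^ (e : ℕ) = ((-1 : k) ^ (e : ℕ)) • (N.x a ^ (e : ℕ) * N.x i) := by
  rcases fin2_em e with rfl | rfl
  · simp
  · rw [Fin.val_one, pow_one, pow_one, N.x_mul_x i a, neg_one_smul]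

lemma x_mul_prodL (N : NicholsData k n H) (i : Fin (n-1)) (r : Fin (n-1) → Fin 2) :
    ∀ L : List (Fin (n-1)),
      N.x i * (L.map fun j => N.x j ^ ((r j : ℕ))).prod
        = ((-1 : k) ^ ((L.map fun j => ((r j : ℕ))).sum)) •
            ((L.map fun j => N.x j ^ ((r j : ℕ))).prod * N.x i)
  | [] => by simp
  | (a :: L) => by
      rw [List.map_cons, List.prod_cons, List.map_cons, List.sum_cons, ← mul_assoc,
        x_mul_xpow N i a, smul_mul_assoc, mul_assoc, x_mul_prodL N i r L,
        mul_smul_comm, smul_smul, ← pow_add, ← mul_assoc]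

lemma map_update (N : NicholsData k n H) (i : Fin (n-1)) (r : Fin (n-1) → Fin 2)
    (v : Fin 2) (L : List (Fin (n-1))) (h : i ∉ L) :
    (L.map fun j => N.x j ^ ((Function.update r i v j : ℕ)))
      = L.map fun j => N.x j ^ ((r j : ℕ)) :=
  List.map_congr_left fun j hj => by
    rw [Function.update_of_ne (by rintro rfl; exact h hj)]

lemma x_mul_Xr_one (N : NicholsData k n H) (i : Fin (n-1)) (r : Fin (n-1) → Fin 2)
    (h1 : r i = 1) : N.x i * Xr N r = 0 := by
  obtain ⟨L₁, L₂, hsplit, hlt, _⟩ := split_finRange i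
  unfold Xr
  rw [hsplit, List.map_append, List.prod_append, List.map_cons, List.prod_cons,
    ← mul_assoc, x_mul_prodL N i r L₁, smul_mul_assoc, mul_assoc, h1, Fin.val_one, pow_one,
    ← mul_assoc (N.x i), ← pow_two, N.x_sq, zero_mul, mul_zero, smul_zero]

lemma x_mul_Xr (N : NicholsData k n H) (i : Fin (n-1)) (r : Fin (n-1) → Fin 2)
    (h0 : r i = 0) :
    ∃ s : ℕ, N.x i * Xr N r = ((-1 : k) ^ s) • Xr N (Function.update r i 1)
      ∧ ((∀ t, t < i → r t = 0) → s = 0) := by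
  obtain ⟨L₁, L₂, hsplit, hlt, _⟩ := split_finRange i
  have hi1 : i ∉ L₁ := fun h => lt_irrefl i (hlt i h)
  refine ⟨(L₁.map fun j => ((r j : ℕ))).sum, ?_, ?_⟩
  · unfold Xr
    rw [hsplit, List.map_append, List.prod_append, List.map_cons, List.prod_cons,
      List.map_append, List.prod_append, List.map_cons, List.prod_cons,
      ← mul_assoc, x_mul_prodL N i r L₁, smul_mul_assoc, mul_assoc,
      h0, Fin.val_zero, pow_zero, one_mul, Function.update_self, Fin.val_one, pow_one]
    congr 2
    · exact congrArg List.prod (map_update N i r 1 L₁ hi1).symm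
    · have hi2 : i ∉ L₂ := by
        have hnd := List.nodup_finRange (n - 1)
        rw [hsplit] at hnd
        exact (List.nodup_cons.mp hnd.of_append_right).1
      exact congrArg (fun z => N.x i * z) (congrArg List.prod (map_update N i r 1 L₂ hi2).symm)
  · intro hall
    refine List.sum_eq_zero fun u hu => ?_
    obtain ⟨j, hj, rfl⟩ := List.mem_map.mp hu
    rw [hall j (hlt j hj), Fin.val_zero]

lemma Xr_zero_fun (N : NicholsData k n H) : Xr N (fun _ => 0) = 1 := by
  refine List.prod_eq_one fun u hu => ?_
  obtain ⟨j, _, rfl⟩ := List.mem_map.mp hu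
  simp

lemma Xr_dlt (N : NicholsData k n H) (i : Fin (n-1)) : Xr N (dlt i) = N.x i := by
  obtain ⟨s, hs, hs0⟩ := x_mul_Xr N i (fun _ => 0) rfl
  rw [hs0 (fun _ _ => rfl), pow_zero, one_smul] at hs
  rw [dlt, ← hs, Xr_zero_fun, mul_one]

lemma basis_one (N : NicholsData k n H) : N.basis (0, fun _ => 0) = 1 := by
  rw [basis_eq', Fin.val_zero, pow_zero, one_mul, Xr_zero_fun]

lemma basis_g (N : NicholsData k n H) : N.basis (1, fun _ => 0) = N.g := by
  rw [basis_eq', Fin.val_one, pow_one, Xr_zero_fun, mul_one]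

lemma basis_dlt0 (N : NicholsData k n H) (i : Fin (n-1)) :
    N.basis (0, dlt i) = N.x i := by
  rw [basis_eq', Fin.val_zero, pow_zero, one_mul, Xr_dlt]

lemma basis_dlt1 (N : NicholsData k n H) (i : Fin (n-1)) :
    N.basis (1, dlt i) = N.g * N.x i := by
  rw [basis_eq', Fin.val_one, pow_one, Xr_dlt]

lemma g_mul_basis (N : NicholsData k n H) (l : Fin 2) (r : Fin (n-1) → Fin 2) :
    N.g * N.basis (l, r) = N.basis (l + 1, r) := by
  rcases fin2_em l with rfl | rfl
  · rw [basis_eq', basis_eq']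
    norm_num
  · rw [basis_eq', basis_eq']
    show N.g * (N.g ^ ((1:Fin 2) : ℕ) * Xr N r) = N.g ^ (((1:Fin 2) + 1 : Fin 2) : ℕ) * Xr N r
    rw [Fin.val_one, pow_one, ← mul_assoc, g_mul_g]
    have h2 : (((1:Fin 2) + 1 : Fin 2) : ℕ) = 0 := rfl
    rw [h2, pow_zero, one_mul]

lemma x_mul_basis_one (N : NicholsData k n H) (i : Fin (n-1)) (l : Fin 2)
    (r : Fin (n-1) → Fin 2) (h1 : r i = 1) : N.x i * N.basis (l, r) = 0 := by
  rw [basis_eq', ← mul_assoc, x_mul_gpow, smul_mul_assoc, mul_assoc,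
    x_mul_Xr_one N i r h1, mul_zero, smul_zero]

lemma x_mul_basis (N : NicholsData k n H) (i : Fin (n-1)) (l : Fin 2)
    (r : Fin (n-1) → Fin 2) (h0 : r i = 0) :
    ∃ s : ℕ, N.x i * N.basis (l, r)
        = ((-1 : k) ^ ((l : ℕ) + s)) • N.basis (l, Function.update r i 1)
      ∧ ((∀ t, t < i → r t = 0) → s = 0) := by
  obtain ⟨s, hs, hs0⟩ := x_mul_Xr N i r h0
  refine ⟨s, ?_, hs0⟩
  rw [basis_eq', ← mul_assoc, x_mul_gpow, smul_mul_assoc, mul_assoc, hs,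
    mul_smul_comm, smul_smul, ← pow_add, basis_eq']

lemma sum_finRange_map (f : Fin m → ℕ) :
    ((List.finRange m).map f).sum = ∑ i, f i := by
  rw [← List.ofFn_eq_map, List.sum_ofFn]

/-- span of basis elements of degree at least d -/
def Dge (N : NicholsData k n H) (d : ℕ) : Submodule k H :=
  Submodule.span k (N.basis '' {p | d ≤ ∑ i, ((p.2 i : ℕ))})

lemma Dge_mono (N : NicholsData k n H) {d e : ℕ} (h : d ≤ e) : Dge N e ≤ Dge N d :=
  Submodule.span_mono (Set.image_mono fun _ hp => le_trans h hp)

lemma basis_mem_Dge (N : NicholsData k n H) (p : Fin 2 × (Fin (n-1) → Fin 2)) (d : ℕ)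
    (h : d ≤ ∑ i, ((p.2 i : ℕ))) : N.basis p ∈ Dge N d :=
  Submodule.subset_span ⟨p, h, rfl⟩

lemma g_mul_Dge (N : NicholsData k n H) {d : ℕ} {z : H} (hz : z ∈ Dge N d) :
    N.g * z ∈ Dge N d := by
  induction hz using Submodule.span_induction with
  | mem u hu =>
    obtain ⟨p, hp, rfl⟩ := hu
    obtain ⟨l, r⟩ := p
    rw [g_mul_basis]
    exact basis_mem_Dge N _ d hp
  | zero => rw [mul_zero]; exact zero_mem _
  | add a b _ _ ha hb => rw [mul_add]; exact add_mem ha hb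
  | smul c a _ ha => rw [mul_smul_comm]; exact Submodule.smul_mem _ _ ha

lemma x_mul_Dge (N : NicholsData k n H) (i : Fin (n-1)) {d : ℕ} {z : H}
    (hz : z ∈ Dge N d) : N.x i * z ∈ Dge N (d + 1) := by
  induction hz using Submodule.span_induction with
  | mem u hu =>
    obtain ⟨p, hp, rfl⟩ := hu
    obtain ⟨l, r⟩ := p
    rcases fin2_em (r i) with h0 | h1
    · obtain ⟨s, hs, _⟩ := x_mul_basis N i l r h0
      rw [hs]
      refine Submodule.smul_mem _ _ (basis_mem_Dge N _ _ ?_)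
      show d + 1 ≤ ∑ t, ((Function.update r i 1 t : ℕ))
      rw [deg_update h0]
      exact Nat.add_le_add_right hp 1
    · rw [x_mul_basis_one N i l r h1]; exact zero_mem _
  | zero => rw [mul_zero]; exact zero_mem _
  | add a b _ _ ha hb => rw [mul_add]; exact add_mem ha hb
  | smul c a _ ha => rw [mul_smul_comm]; exact Submodule.smul_mem _ _ ha

lemma prodL_mul_Dge (N : NicholsData k n H) (r : Fin (n-1) → Fin 2)
    (L : List (Fin (n-1))) : ∀ {d : ℕ} {z : H}, z ∈ Dge N d →
      ((L.map fun j => N.x j ^ ((r j : ℕ))).prod) * z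
        ∈ Dge N ((L.map fun j => ((r j : ℕ))).sum + d) := by
  induction L with
  | nil =>
    intro d z hz
    simp only [List.map_nil, List.prod_nil, List.sum_nil, one_mul, zero_add]
    exact hz
  | cons a L IH =>
    intro d z hz
    simp only [List.map_cons, List.prod_cons, List.sum_cons]
    rw [mul_assoc]
    have IH2 := IH hz
    rcases fin2_em (r a) with h0 | h1
    · rw [h0, Fin.val_zero, pow_zero, one_mul, zero_add]
      exact IH2
    · rw [h1, Fin.val_one, pow_one]
      have hx := x_mul_Dge N a IH2
      have harith : (L.map fun j => ((r j : ℕ))).sum + d + 1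
          = 1 + (L.map fun j => ((r j : ℕ))).sum + d := by omega
      rwa [harith] at hx

lemma basis_mul_Dge (N : NicholsData k n H) (q : Fin 2 × (Fin (n-1) → Fin 2))
    {d : ℕ} {z : H} (hz : z ∈ Dge N d) :
    N.basis q * z ∈ Dge N ((∑ i, ((q.2 i : ℕ))) + d) := by
  obtain ⟨l, r⟩ := q
  rw [basis_eq', mul_assoc]
  have h1 := prodL_mul_Dge N r (List.finRange (n-1)) hz
  rw [sum_finRange_map] at h1
  rcases fin2_em l with rfl | rfl
  · rw [Fin.val_zero, pow_zero, one_mul]; exact h1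
  · rw [Fin.val_one, pow_one]; exact g_mul_Dge N h1

lemma mul_basis_Dge2 (N : NicholsData k n H) {z : H} (hz : z ∈ Dge N 2)
    (p : Fin 2 × (Fin (n-1) → Fin 2)) : z * N.basis p ∈ Dge N 2 := by
  induction hz using Submodule.span_induction with
  | mem u hu =>
    obtain ⟨q, hq, rfl⟩ := hu
    have hq' : 2 ≤ ∑ i, ((q.2 i : ℕ)) := hq
    have h1 := basis_mul_Dge N q (basis_mem_Dge N p 0 (Nat.zero_le _))
    exact Dge_mono N (by omega) h1
  | zero => rw [zero_mul]; exact zero_mem _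
  | add a b _ _ ha hb => rw [add_mul]; exact add_mem ha hb
  | smul c a _ ha => rw [smul_mul_assoc]; exact Submodule.smul_mem _ _ ha

/-- span of pure tensors of basis elements of total degree at least c -/
def Qge (N : NicholsData k n H) (c : ℕ) : Submodule k (H ⊗[k] H) :=
  Submodule.span k {u | ∃ p q : Fin 2 × (Fin (n-1) → Fin 2),
    c ≤ (∑ i, ((p.2 i : ℕ))) + (∑ i, ((q.2 i : ℕ))) ∧ u = N.basis p ⊗ₜ[k] N.basis q}

lemma Qge_mono (N : NicholsData k n H) {d e : ℕ} (h : d ≤ e) : Qge N e ≤ Qge N d :=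
  Submodule.span_mono fun _ ⟨p, q, hpq, hu⟩ => ⟨p, q, le_trans h hpq, hu⟩

lemma tmul_mem_Qge (N : NicholsData k n H) {a c : ℕ} {u v : H}
    (hu : u ∈ Dge N a) (hv : v ∈ Dge N c) : u ⊗ₜ[k] v ∈ Qge N (a + c) := by
  induction hu using Submodule.span_induction with
  | mem u hu =>
    obtain ⟨p, hp, rfl⟩ := hu
    induction hv using Submodule.span_induction with
    | mem v hv =>
      obtain ⟨q, hq, rfl⟩ := hv
      exact Submodule.subset_span ⟨p, q, Nat.add_le_add hp hq, rfl⟩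
    | zero => rw [TensorProduct.tmul_zero]; exact zero_mem _
    | add a b _ _ ha hb => rw [TensorProduct.tmul_add]; exact add_mem ha hb
    | smul c a _ ha => rw [TensorProduct.tmul_smul]; exact Submodule.smul_mem _ _ ha
  | zero => rw [TensorProduct.zero_tmul]; exact zero_mem _
  | add a b _ _ ha hb => rw [TensorProduct.add_tmul]; exact add_mem ha hb
  | smul c a _ ha => rw [← TensorProduct.smul_tmul']; exact Submodule.smul_mem _ _ ha

lemma mul_mem_Qge (N : NicholsData k n H) {a c : ℕ} {z w : H ⊗[k] H}
    (hz : z ∈ Qge N a) (hw : w ∈ Qge N c) : z * w ∈ Qge N (a + c) := by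
  induction hz using Submodule.span_induction with
  | mem u hu =>
    obtain ⟨p, p', hpp, rfl⟩ := hu
    induction hw using Submodule.span_induction with
    | mem v hv =>
      obtain ⟨q, q', hqq, rfl⟩ := hv
      rw [Algebra.TensorProduct.tmul_mul_tmul]
      have h1 := basis_mul_Dge N p (basis_mem_Dge N q _ (le_refl _))
      have h2 := basis_mul_Dge N p' (basis_mem_Dge N q' _ (le_refl _))
      have h3 := tmul_mem_Qge N h1 h2
      exact Qge_mono N (by omega) h3
    | zero => rw [mul_zero]; exact zero_mem _
    | add a b _ _ ha hb => rw [mul_add]; exact add_mem ha hb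
    | smul c a _ ha => rw [mul_smul_comm]; exact Submodule.smul_mem _ _ ha
  | zero => rw [zero_mul]; exact zero_mem _
  | add a b _ _ ha hb => rw [add_mul]; exact add_mem ha hb
  | smul c a _ ha => rw [smul_mul_assoc]; exact Submodule.smul_mem _ _ ha

lemma one_tmul_one_mem (N : NicholsData k n H) : (1:H) ⊗ₜ[k] (1:H) ∈ Qge N 0 :=
  Submodule.subset_span ⟨(0, fun _ => 0), (0, fun _ => 0), Nat.zero_le _,
    by rw [basis_one]⟩

lemma comul_one_mem (N : NicholsData k n H) :
    Coalgebra.comul (R := k) (1 : H) ∈ Qge N 0 := by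
  rw [Bialgebra.comul_one, Algebra.TensorProduct.one_def]
  exact one_tmul_one_mem N

lemma comul_pow_x_mem (N : NicholsData k n H) (a : Fin (n-1)) (e : Fin 2) :
    Coalgebra.comul (R := k) (N.x a ^ ((e : ℕ))) ∈ Qge N ((e : ℕ)) := by
  rcases fin2_em e with rfl | rfl
  · rw [Fin.val_zero, pow_zero]
    exact comul_one_mem N
  · rw [Fin.val_one, pow_one, N.comul_x a]
    refine add_mem ?_ ?_
    · refine Submodule.subset_span ⟨(0, dlt a), (0, fun _ => 0), ?_, ?_⟩
      · show 1 ≤ (∑ i, ((dlt a i : ℕ))) + ∑ i : Fin (n-1), (((0:Fin 2) : ℕ))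
        rw [deg_dlt]
        omega
      · rw [basis_dlt0, basis_one]
    · refine Submodule.subset_span ⟨(1, fun _ => 0), (0, dlt a), ?_, ?_⟩
      · show 1 ≤ (∑ i : Fin (n-1), (((0:Fin 2) : ℕ))) + ∑ i, ((dlt a i : ℕ))
        rw [deg_dlt]
        omega
      · rw [basis_g, basis_dlt0]

lemma comul_prodL_mem (N : NicholsData k n H) (r : Fin (n-1) → Fin 2)
    (L : List (Fin (n-1))) :
    Coalgebra.comul (R := k) ((L.map fun j => N.x j ^ ((r j : ℕ))).prod)
      ∈ Qge N ((L.map fun j => ((r j : ℕ))).sum) := by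
  induction L with
  | nil =>
    simp only [List.map_nil, List.prod_nil, List.sum_nil]
    exact comul_one_mem N
  | cons a L IH =>
    simp only [List.map_cons, List.prod_cons, List.sum_cons]
    rw [Bialgebra.comul_mul]
    exact mul_mem_Qge N (comul_pow_x_mem N a (r a)) IH

lemma comul_basis_mem (N : NicholsData k n H) (p : Fin 2 × (Fin (n-1) → Fin 2)) :
    Coalgebra.comul (R := k) (N.basis p) ∈ Qge N (∑ i, ((p.2 i : ℕ))) := by
  obtain ⟨l, r⟩ := p
  rw [basis_eq']
  have hXr := comul_prodL_mem N r (List.finRange (n-1))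
  rw [sum_finRange_map] at hXr
  rcases fin2_em l with rfl | rfl
  · rw [Fin.val_zero, pow_zero, one_mul]
    exact hXr
  · rw [Fin.val_one, pow_one, Bialgebra.comul_mul, N.comul_g]
    have hg : N.g ⊗ₜ[k] N.g ∈ Qge N 0 :=
      Submodule.subset_span ⟨(1, fun _ => 0), (1, fun _ => 0), Nat.zero_le _,
        by rw [basis_g]⟩
    have := mul_mem_Qge N hg hXr
    rwa [zero_add] at this

section Lam

variable (N : NicholsData k n H) (lam : H →ₗ[k] k) (α : Fin (n-1) → k)

lemma lam_Dge2 (hlam0 : ∀ p : Fin 2 × (Fin (n - 1) → Fin 2),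
      2 ≤ ∑ i, ((p.2 i : ℕ)) → lam (N.basis p) = 0)
    {z : H} (hz : z ∈ Dge N 2) : lam z = 0 := by
  induction hz using Submodule.span_induction with
  | mem u hu => obtain ⟨p, hp, rfl⟩ := hu; exact hlam0 p hp
  | zero => exact map_zero lam
  | add a b _ _ ha hb => rw [map_add, ha, hb, add_zero]
  | smul c a _ ha => rw [map_smul, ha, smul_zero]

lemma lam_Dge2_mul (hlam0 : ∀ p : Fin 2 × (Fin (n - 1) → Fin 2),
      2 ≤ ∑ i, ((p.2 i : ℕ)) → lam (N.basis p) = 0)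
    {z : H} (hz : z ∈ Dge N 2) (y : H) : lam (z * y) = 0 := by
  have hy : y ∈ Submodule.span k (Set.range N.basis) := by
    rw [N.basis.span_eq]; trivial
  induction hy using Submodule.span_induction with
  | mem u hu =>
    obtain ⟨p, rfl⟩ := hu
    exact lam_Dge2 N lam hlam0 (mul_basis_Dge2 N hz p)
  | zero => rw [mul_zero, map_zero]
  | add a b _ _ ha hb => rw [mul_add, map_add, ha, hb, add_zero]
  | smul c a _ ha => rw [mul_smul_comm, map_smul, ha, smul_zero]

lemma lam_x_mul_basis_zero (hd : ∀ (l : Fin 2) (i : Fin (n-1)), lam (N.basis (l, dlt i)) = α i)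
    (i : Fin (n-1)) (l : Fin 2) :
    lam (N.x i * N.basis (l, fun _ => 0)) = ((-1:k) ^ (l : ℕ)) * α i := by
  obtain ⟨s, hs, hs0⟩ := x_mul_basis N i l (fun _ => 0) rfl
  have hs0' := hs0 (fun _ _ => rfl)
  subst hs0'
  rw [hs, map_smul, smul_eq_mul, Nat.add_zero]
  rw [show Function.update (fun _ => (0 : Fin 2)) i 1 = dlt i from rfl, hd]

lemma lam_gx_mul_basis_zero (hd : ∀ (l : Fin 2) (i : Fin (n-1)), lam (N.basis (l, dlt i)) = α i)
    (i : Fin (n-1)) (l : Fin 2) :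
    lam (N.g * (N.x i * N.basis (l, fun _ => 0))) = ((-1:k) ^ (l : ℕ)) * α i := by
  obtain ⟨s, hs, hs0⟩ := x_mul_basis N i l (fun _ => 0) rfl
  have hs0' := hs0 (fun _ _ => rfl)
  subst hs0'
  rw [hs, mul_smul_comm, g_mul_basis, map_smul, smul_eq_mul, Nat.add_zero]
  rw [show Function.update (fun _ => (0 : Fin 2)) i 1 = dlt i from rfl, hd]

lemma lam_x_mul_basis_pos (hlam0 : ∀ p : Fin 2 × (Fin (n - 1) → Fin 2),
      2 ≤ ∑ i, ((p.2 i : ℕ)) → lam (N.basis p) = 0)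
    (i : Fin (n-1)) (l : Fin 2) (s : Fin (n-1) → Fin 2) (hpos : 1 ≤ ∑ t, ((s t : ℕ))) :
    lam (N.x i * N.basis (l, s)) = 0 := by
  rcases fin2_em (s i) with h0 | h1
  · obtain ⟨c, hc, _⟩ := x_mul_basis N i l s h0
    rw [hc, map_smul, hlam0 (l, Function.update s i 1) (by
      show 2 ≤ ∑ t, ((Function.update s i 1 t : ℕ))
      rw [deg_update h0]; omega), smul_zero]
  · rw [x_mul_basis_one N i l s h1, map_zero]

lemma lam_gx_mul_basis_pos (hlam0 : ∀ p : Fin 2 × (Fin (n - 1) → Fin 2),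
      2 ≤ ∑ i, ((p.2 i : ℕ)) → lam (N.basis p) = 0)
    (i : Fin (n-1)) (l : Fin 2) (s : Fin (n-1) → Fin 2) (hpos : 1 ≤ ∑ t, ((s t : ℕ))) :
    lam (N.g * (N.x i * N.basis (l, s))) = 0 := by
  rcases fin2_em (s i) with h0 | h1
  · obtain ⟨c, hc, _⟩ := x_mul_basis N i l s h0
    rw [hc, mul_smul_comm, g_mul_basis, map_smul, hlam0 (l + 1, Function.update s i 1) (by
      show 2 ≤ ∑ t, ((Function.update s i 1 t : ℕ))
      rw [deg_update h0]; omega), smul_zero]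
  · rw [x_mul_basis_one N i l s h1, mul_zero, map_zero]

end Lam

end NPAux

open NPAux

/-- Proposition 4.1.1: for every `α = (α_1, …, α_{n−1}) ∈ k^{n−1}`, the linear map
`λ_α : H_{2^n} → k` determined on the canonical basis `B` by `λ_α(1) = 1`,
`λ_α(x_i) = λ_α(g x_i) = α_i` for all `i`, and `λ_α = 0` on all other elements of `B`
(in particular `λ_α(g) = 0` and `λ_α` vanishes on every basis element involving at least two
of the `x_i`), is a partial action of the Nichols Hopf algebra `H_{2^n}` on `k`. -/
theorem prop_4_1_1 {k H : Type*} [Field k] [Ring H] [HopfAlgebra k H]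
    {n : ℕ} (hn : 2 ≤ n) (hchar : ringChar k ≠ 2)
    (N : NicholsData k n H) (α : Fin (n - 1) → k) (lam : H →ₗ[k] k)
    (hlam1 : lam 1 = 1)
    (hlamg : lam N.g = 0)
    (hlamx : ∀ i, lam (N.x i) = α i)
    (hlamgx : ∀ i, lam (N.g * N.x i) = α i)
    (hlam0 : ∀ p : Fin 2 × (Fin (n - 1) → Fin 2),
      2 ≤ ∑ i, ((p.2 i : ℕ)) → lam (N.basis p) = 0) :
    IsPartialAction k H lam := by
  have f01 : (0 : Fin 2) + 1 = 1 := rfl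
  have f11 : (1 : Fin 2) + 1 = 0 := rfl
  have hd : ∀ (l : Fin 2) (i : Fin (n-1)), lam (N.basis (l, dlt i)) = α i := by
    intro l i
    rcases fin2_em l with rfl | rfl
    · rw [basis_dlt0]; exact hlamx i
    · rw [basis_dlt1]; exact hlamgx i
  have hb0 : lam (N.basis (0, fun _ => 0)) = 1 := by rw [basis_one]; exact hlam1
  have hb1 : lam (N.basis (1, fun _ => 0)) = 0 := by rw [basis_g]; exact hlamg
  have hlCont : ∀ w : H, lCont k H lam w
      = (TensorProduct.lid k H) ((TensorProduct.map lam LinearMap.id)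
          (Coalgebra.comul (R := k) w)) := fun _ => rfl
  -- lam is invariant under multiplying a positive-degree basis element by g
  have hsame : ∀ (l : Fin 2) (s : Fin (n-1) → Fin 2), 1 ≤ ∑ t, ((s t : ℕ)) →
      lam (N.basis (l + 1, s)) = lam (N.basis (l, s)) := by
    intro l s hpos
    rcases Nat.lt_or_ge (∑ t, ((s t : ℕ))) 2 with h2 | h2
    · have h1 : ∑ t, ((s t : ℕ)) = 1 := by omega
      obtain ⟨j, rfl⟩ := deg_one h1
      rw [hd, hd]
    · rw [hlam0 (l + 1, s) h2, hlam0 (l, s) h2]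
  -- the two cancellation claims
  have claim0 : ∀ (i j : Fin (n-1)) (y : H),
      α j * lam (N.x i * y) = α i * lam (N.x j * y) := by
    intro i j y
    have hy : y ∈ Submodule.span k (Set.range N.basis) := by
      rw [N.basis.span_eq]; trivial
    induction hy using Submodule.span_induction with
    | mem u hu =>
      obtain ⟨p, rfl⟩ := hu
      obtain ⟨l, s⟩ := p
      rcases Nat.eq_zero_or_pos (∑ t, ((s t : ℕ))) with h0 | h1
      · obtain rfl := deg_zero h0
        rw [lam_x_mul_basis_zero N lam α hd, lam_x_mul_basis_zero N lam α hd]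
        ring
      · rw [lam_x_mul_basis_pos N lam hlam0 i l s h1,
          lam_x_mul_basis_pos N lam hlam0 j l s h1, mul_zero, mul_zero]
    | zero => simp
    | add a b _ _ ha hb =>
      simp only [mul_add, map_add]
      rw [ha, hb]
    | smul c a _ ha =>
      simp only [mul_smul_comm, map_smul, smul_eq_mul]
      rw [mul_left_comm, ha, mul_left_comm]
  have claim1 : ∀ (i j : Fin (n-1)) (y : H),
      α j * lam (N.g * (N.x i * y)) = α i * lam (N.g * (N.x j * y)) := by
    intro i j y
    have hy : y ∈ Submodule.span k (Set.range N.basis) := by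
      rw [N.basis.span_eq]; trivial
    induction hy using Submodule.span_induction with
    | mem u hu =>
      obtain ⟨p, rfl⟩ := hu
      obtain ⟨l, s⟩ := p
      rcases Nat.eq_zero_or_pos (∑ t, ((s t : ℕ))) with h0 | h1
      · obtain rfl := deg_zero h0
        rw [lam_gx_mul_basis_zero N lam α hd, lam_gx_mul_basis_zero N lam α hd]
        ring
      · rw [lam_gx_mul_basis_pos N lam hlam0 i l s h1,
          lam_gx_mul_basis_pos N lam hlam0 j l s h1, mul_zero, mul_zero]
    | zero => simp
    | add a b _ _ ha hb =>
      simp only [mul_add, map_add]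
      rw [ha, hb]
    | smul c a _ ha =>
      simp only [mul_smul_comm, map_smul, smul_eq_mul]
      rw [mul_left_comm, ha, mul_left_comm]
  refine ⟨hlam1, ?_⟩
  intro h
  show ∀ y, lam h * lam y = lam (lCont k H lam h * y)
  have hh : h ∈ Submodule.span k (Set.range N.basis) := by
    rw [N.basis.span_eq]; trivial
  induction hh using Submodule.span_induction with
  | zero =>
    intro y
    rw [map_zero, map_zero, zero_mul, zero_mul, map_zero]
  | add a b _ _ ha hb =>
    intro y
    rw [map_add, map_add, add_mul, add_mul, map_add, ha y, hb y]
  | smul c a _ ha =>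
    intro y
    rw [map_smul, map_smul, smul_mul_assoc, smul_mul_assoc, map_smul, smul_eq_mul,
      smul_eq_mul, ha y]
  | mem u hu =>
    obtain ⟨p, rfl⟩ := hu
    obtain ⟨l, r⟩ := p
    rcases Nat.lt_or_ge (∑ t, ((r t : ℕ))) 3 with hlt | hge
    · have hcase : (∑ t, ((r t : ℕ))) = 0 ∨ (∑ t, ((r t : ℕ))) = 1
          ∨ (∑ t, ((r t : ℕ))) = 2 := by omega
      rcases hcase with h0 | h1 | h2
      · -- degree 0 : h = 1 or g
        obtain rfl := deg_zero h0
        rcases fin2_em l with rfl | rfl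
        · have e1 : lCont k H lam (N.basis (0, fun _ => 0)) = 1 := by
            rw [hlCont, basis_one, Bialgebra.comul_one, Algebra.TensorProduct.one_def,
              TensorProduct.map_tmul, TensorProduct.lid_tmul, hlam1, LinearMap.id_apply,
              one_smul]
          intro y
          rw [hb0, one_mul, e1, one_mul]
        · have e2 : lCont k H lam (N.basis (1, fun _ => 0)) = 0 := by
            rw [hlCont, basis_g, N.comul_g, TensorProduct.map_tmul, TensorProduct.lid_tmul,
              hlamg, LinearMap.id_apply, zero_smul]
          intro y
          rw [hb1, zero_mul, e2, zero_mul, map_zero]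
      · -- degree 1 : h = x i or g * x i
        obtain ⟨i, rfl⟩ := deg_one h1
        rcases fin2_em l with rfl | rfl
        · have e3 : lCont k H lam (N.basis (0, dlt i)) = α i • 1 := by
            rw [hlCont, basis_dlt0, N.comul_x i, map_add, map_add,
              TensorProduct.map_tmul, TensorProduct.map_tmul, TensorProduct.lid_tmul,
              TensorProduct.lid_tmul, hlamx, hlamg, LinearMap.id_apply, LinearMap.id_apply,
              zero_smul, add_zero]
          intro y
          rw [hd, e3, smul_mul_assoc, one_mul, map_smul, smul_eq_mul]
        · have e4 : lCont k H lam (N.basis (1, dlt i)) = α i • N.g + N.g * N.x i := by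
            rw [hlCont, basis_dlt1, Bialgebra.comul_mul, N.comul_g, N.comul_x i, mul_add,
              Algebra.TensorProduct.tmul_mul_tmul, Algebra.TensorProduct.tmul_mul_tmul,
              mul_one, g_mul_g, map_add, map_add, TensorProduct.map_tmul,
              TensorProduct.map_tmul, TensorProduct.lid_tmul, TensorProduct.lid_tmul,
              hlamgx, hlam1, LinearMap.id_apply, LinearMap.id_apply, one_smul]
          intro y
          rw [hd, e4, add_mul, smul_mul_assoc, map_add, map_smul, smul_eq_mul, mul_assoc]
          -- goal : α i * lam y = α i * lam (N.g * y) + lam (N.g * (N.x i * y))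
          have hy : y ∈ Submodule.span k (Set.range N.basis) := by
            rw [N.basis.span_eq]; trivial
          induction hy using Submodule.span_induction with
          | mem u hu =>
            obtain ⟨q, rfl⟩ := hu
            obtain ⟨l', s⟩ := q
            rcases Nat.eq_zero_or_pos (∑ t, ((s t : ℕ))) with hs0 | hs1
            · obtain rfl := deg_zero hs0
              rw [lam_gx_mul_basis_zero N lam α hd, g_mul_basis]
              rcases fin2_em l' with rfl | rfl
              · rw [f01, hb0, hb1, Fin.val_zero, pow_zero]; ring
              · rw [f11, hb1, hb0, Fin.val_one, pow_one]; ring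
            · rw [lam_gx_mul_basis_pos N lam hlam0 i l' s hs1, g_mul_basis,
                hsame l' s hs1, add_zero]
          | zero => simp
          | add a b _ _ ha hb =>
            simp only [mul_add, map_add]
            rw [ha, hb]; ring
          | smul c a _ ha =>
            simp only [mul_smul_comm, map_smul, smul_eq_mul]
            rw [mul_left_comm (α i), mul_left_comm (α i), ha]; ring
      · -- degree 2
        obtain ⟨i, j, hij, rfl⟩ := deg_two h2
        set r := Function.update (dlt j) i 1 with hrdef
        have hrj : dlt j i = 0 := Function.update_of_ne (Fin.ne_of_lt hij) _ _
        have hXr : Xr N r = N.x i * N.x j := by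
          obtain ⟨s, hs, hs0⟩ := x_mul_Xr N i (dlt j) hrj
          have hs0' := hs0 (fun t ht => Function.update_of_ne
            (Fin.ne_of_lt (lt_trans ht hij)) _ _)
          subst hs0'
          rw [pow_zero, one_smul] at hs
          rw [← hs, Xr_dlt]
        have hdeg2 : 2 ≤ ∑ t, ((r t : ℕ)) := le_of_eq h2.symm
        have hBD : N.basis (l, r) ∈ Dge N 2 := basis_mem_Dge N (l, r) 2 hdeg2
        have hlamB : lam (N.basis (l, r)) = 0 := hlam0 (l, r) hdeg2
        have hcomul4 : Coalgebra.comul (R := k) (N.x i * N.x j)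
            = (N.x i * N.x j) ⊗ₜ[k] 1 - (N.g * N.x i) ⊗ₜ[k] N.x j
              + (N.g * N.x j) ⊗ₜ[k] N.x i + 1 ⊗ₜ[k] (N.x i * N.x j) := by
          rw [Bialgebra.comul_mul, N.comul_x i, N.comul_x j, add_mul, mul_add, mul_add]
          simp only [Algebra.TensorProduct.tmul_mul_tmul, mul_one, one_mul]
          rw [g_mul_g, N.x_mul_g i, TensorProduct.neg_tmul]
          abel
        rcases fin2_em l with rfl | rfl
        · have hbasis : N.basis (0, r) = N.x i * N.x j := by
            rw [basis_eq', Fin.val_zero, pow_zero, one_mul, hXr]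
          have hlamB' : lam (N.x i * N.x j) = 0 := by rw [← hbasis]; exact hlamB
          have e5 : lCont k H lam (N.basis (0, r))
              = α j • N.x i + N.x i * N.x j - α i • N.x j := by
            rw [hlCont, hbasis, hcomul4]
            simp only [map_add, map_sub, TensorProduct.map_tmul, TensorProduct.lid_tmul,
              LinearMap.id_apply]
            rw [hlamB', hlamgx, hlamgx, hlam1]
            simp only [zero_smul, one_smul]
            abel
          intro y
          rw [hlamB, zero_mul, e5]
          rw [sub_mul, add_mul, smul_mul_assoc, smul_mul_assoc, map_sub, map_add,
            map_smul, map_smul, smul_eq_mul, smul_eq_mul]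
          rw [← hbasis]
          rw [lam_Dge2_mul N lam hlam0 hBD y, claim0 i j y, add_zero, sub_self]
        · have hbasis : N.basis (1, r) = N.g * (N.x i * N.x j) := by
            rw [basis_eq', Fin.val_one, pow_one, hXr]
          have hlamB1' : lam (N.g * (N.x i * N.x j)) = 0 := by rw [← hbasis]; exact hlamB
          have e6 : lCont k H lam (N.basis (1, r))
              = α j • (N.g * N.x i) - α i • (N.g * N.x j) := by
            rw [hlCont, hbasis, Bialgebra.comul_mul, N.comul_g, hcomul4]
            simp only [mul_add, mul_sub, Algebra.TensorProduct.tmul_mul_tmul, mul_one]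
            rw [← mul_assoc N.g N.g (N.x i), g_mul_g, one_mul,
              ← mul_assoc N.g N.g (N.x j), g_mul_g, one_mul]
            simp only [map_add, map_sub, TensorProduct.map_tmul, TensorProduct.lid_tmul,
              LinearMap.id_apply]
            rw [hlamB1', hlamx, hlamx, hlamg]
            simp only [zero_smul, one_smul]
            abel
          intro y
          rw [hlamB, zero_mul, e6, sub_mul, smul_mul_assoc, smul_mul_assoc, map_sub,
            map_smul, map_smul, smul_eq_mul, smul_eq_mul, mul_assoc, mul_assoc,
            claim1 i j y, sub_self]
    · -- degree at least 3
      have hc : Coalgebra.comul (R := k) (N.basis (l, r)) ∈ Qge N 3 :=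
        Qge_mono N hge (comul_basis_mem N (l, r))
      have key : ∀ z ∈ Qge N 3, (TensorProduct.lid k H)
          ((TensorProduct.map lam LinearMap.id) z) ∈ Dge N 2 := by
        intro z hz
        induction hz using Submodule.span_induction with
        | mem u hu =>
          obtain ⟨p, q, hpq, rfl⟩ := hu
          rw [TensorProduct.map_tmul, TensorProduct.lid_tmul, LinearMap.id_apply]
          rcases Nat.lt_or_ge (∑ t, ((q.2 t : ℕ))) 2 with hq2 | hq2
          · rw [hlam0 p (by omega), zero_smul]
            exact zero_mem _
          · exact Submodule.smul_mem _ _ (basis_mem_Dge N q 2 hq2)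
        | zero => rw [map_zero, map_zero]; exact zero_mem _
        | add a b _ _ ha hb => rw [map_add, map_add]; exact add_mem ha hb
        | smul c a _ ha => rw [map_smul, map_smul]; exact Submodule.smul_mem _ _ ha
      have hE : lCont k H lam (N.basis (l, r)) ∈ Dge N 2 := by
        rw [hlCont]; exact key _ hc
      intro y
      rw [hlam0 (l, r) (by show 2 ≤ ∑ t, ((r t : ℕ)); omega), zero_mul]
      exact (lam_Dge2_mul N lam hlam0 hE y).symm
end

section
/- Every partial action of the Nichols Hopf algebra H_{2^n} on its base field k is symmetric; that is, every linear map λ : H_{2^n} → k satisfying λ(1) = 1 and λ(h)λ(y) = Σ λ(h₁)λ(h₂y) for all h, y ∈ H_{2^n} also satisfies λ(h)λ(y) = Σ λ(h₁y)λ(h₂) for all h, y ∈ H_{2^n}. (Theorem 4.1.3) -/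
open scoped TensorProduct

section aux

variable {k H : Type*} [CommSemiring k] [Semiring H] [Bialgebra k H]

lemma rCont_apply (μ : H →ₗ[k] k) (z : H) :
    rCont k H μ z =
      (TensorProduct.rid k H) ((TensorProduct.map LinearMap.id μ) (Coalgebra.comul z)) := rfl

lemma lCont_apply (μ : H →ₗ[k] k) (z : H) :
    lCont k H μ z =
      (TensorProduct.lid k H) ((TensorProduct.map μ LinearMap.id) (Coalgebra.comul z)) := rfl

lemma aux_rid_mul (μ : H →ₗ[k] k) (a b : H) (t : H ⊗[k] H) :
    (TensorProduct.rid k H) ((TensorProduct.map LinearMap.id μ) ((a ⊗ₜ[k] b) * t)) =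
      a * (TensorProduct.rid k H)
        ((TensorProduct.map LinearMap.id (μ ∘ₗ LinearMap.mulLeft k b)) t) := by
  induction t using TensorProduct.induction_on with
  | zero => simp
  | tmul c d =>
      simp [Algebra.TensorProduct.tmul_mul_tmul, TensorProduct.rid_tmul, mul_smul_comm,
        LinearMap.mulLeft_apply]
  | add u v hu hv => simp [mul_add, hu, hv]

lemma rCont_one (μ : H →ₗ[k] k) : rCont k H μ 1 = μ 1 • 1 := by
  rw [rCont_apply, Bialgebra.comul_one, Algebra.TensorProduct.one_def]
  simp [TensorProduct.rid_tmul]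

lemma rCont_grouplike (μ : H →ₗ[k] k) (g : H) (hg : Coalgebra.comul (R := k) g = g ⊗ₜ[k] g) :
    rCont k H μ g = μ g • g := by
  rw [rCont_apply, hg]; simp [TensorProduct.rid_tmul]

lemma lCont_grouplike (μ : H →ₗ[k] k) (g : H) (hg : Coalgebra.comul (R := k) g = g ⊗ₜ[k] g) :
    lCont k H μ g = μ g • g := by
  rw [lCont_apply, hg]; simp [TensorProduct.lid_tmul]

lemma rCont_g_mul (μ : H →ₗ[k] k) (g z : H) (hg : Coalgebra.comul (R := k) g = g ⊗ₜ[k] g) :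
    rCont k H μ (g * z) = g * rCont k H (μ ∘ₗ LinearMap.mulLeft k g) z := by
  rw [rCont_apply, Bialgebra.comul_mul, hg, aux_rid_mul, rCont_apply]

lemma rCont_x_mul (μ : H →ₗ[k] k) (g xi z : H)
    (hx : Coalgebra.comul (R := k) xi = xi ⊗ₜ[k] (1 : H) + g ⊗ₜ[k] xi) :
    rCont k H μ (xi * z) =
      xi * rCont k H μ z + g * rCont k H (μ ∘ₗ LinearMap.mulLeft k xi) z := by
  rw [rCont_apply, Bialgebra.comul_mul, hx, add_mul, map_add, map_add, aux_rid_mul, aux_rid_mul]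
  rw [LinearMap.mulLeft_one, LinearMap.comp_id, rCont_apply, rCont_apply]

lemma rCont_smul_sub {k H : Type*} [CommRing k] [Ring H] [Bialgebra k H]
    (a : k) (μ ν : H →ₗ[k] k) (z : H) :
    rCont k H (a • μ - a • ν) z = a • rCont k H μ z - a • rCont k H ν z := by
  rw [rCont_apply, rCont_apply, rCont_apply]
  generalize Coalgebra.comul (R := k) z = t
  induction t using TensorProduct.induction_on with
  | zero => simp
  | tmul c d => simp [TensorProduct.rid_tmul, smul_smul, sub_smul, mul_comm]
  | add u v hu hv =>
      simp only [map_add, hu, hv, smul_add]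
      abel

end aux

section steps

variable {k H : Type*} [CommRing k] [Ring H] [Bialgebra k H]
variable (lam : H →ₗ[k] k) (g xi : H)

/-- `λ ∘ (left mult by xi)` as a linear map, given the pointwise identity. -/
lemma lam_comp_mulLeft_x
    (F3 : ∀ y, lam (xi * y) = lam (g * xi) * lam y - lam (g * xi) * lam (g * y)) :
    lam ∘ₗ LinearMap.mulLeft k xi =
      lam (g * xi) • lam - lam (g * xi) • (lam ∘ₗ LinearMap.mulLeft k g) := by
  ext y
  simp [LinearMap.mulLeft_apply, F3 y, smul_eq_mul]

lemma lam_comp_mulLeft_gx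
    (F2 : ∀ y, lam (g * xi * y) = lam (g * xi) * lam y - lam (g * xi) * lam (g * y)) :
    (lam ∘ₗ LinearMap.mulLeft k g) ∘ₗ LinearMap.mulLeft k xi =
      lam (g * xi) • lam - lam (g * xi) • (lam ∘ₗ LinearMap.mulLeft k g) := by
  ext y
  have := F2 y
  rw [mul_assoc] at this
  simp [LinearMap.mulLeft_apply, this, smul_eq_mul]

lemma step1
    (hcg : Coalgebra.comul (R := k) g = g ⊗ₜ[k] g)
    (hcx : Coalgebra.comul (R := k) xi = xi ⊗ₜ[k] (1 : H) + g ⊗ₜ[k] xi)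
    (F3 : ∀ y, lam (xi * y) = lam (g * xi) * lam y - lam (g * xi) * lam (g * y))
    (z : H)
    (hz : ∀ y, lam z * lam y = lam (rCont k H lam z * y))
    (hgz : ∀ y, lam (g * z) * lam y = lam (rCont k H lam (g * z) * y)) :
    ∀ y, lam (xi * z) * lam y = lam (rCont k H lam (xi * z) * y) := by
  intro y
  set R := rCont k H lam with hRdef
  have hR : R (xi * z) = xi * R z + (lam (g * xi) • (g * R z) - lam (g * xi) • R (g * z)) := by
    rw [hRdef, rCont_x_mul lam g xi z hcx, lam_comp_mulLeft_x lam g xi F3, rCont_smul_sub,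
      mul_sub, rCont_g_mul lam g z hcg, mul_smul_comm, mul_smul_comm]
  rw [hR, add_mul, sub_mul, smul_mul_assoc, smul_mul_assoc, map_add, map_sub, map_smul, map_smul,
    mul_assoc xi, mul_assoc g]
  rw [F3 (R z * y), F3 z, ← hz y, ← hgz y]
  simp only [smul_eq_mul]
  ring

lemma step2
    (hgg : g * g = 1)
    (hcg : Coalgebra.comul (R := k) g = g ⊗ₜ[k] g)
    (hcx : Coalgebra.comul (R := k) xi = xi ⊗ₜ[k] (1 : H) + g ⊗ₜ[k] xi)
    (F2 : ∀ y, lam (g * xi * y) = lam (g * xi) * lam y - lam (g * xi) * lam (g * y))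
    (z : H)
    (hz : ∀ y, lam z * lam y = lam (rCont k H lam z * y))
    (hgz : ∀ y, lam (g * z) * lam y = lam (rCont k H lam (g * z) * y)) :
    ∀ y, lam (g * (xi * z)) * lam y = lam (rCont k H lam (g * (xi * z)) * y) := by
  intro y
  set R := rCont k H lam with hRdef
  set R' := rCont k H (lam ∘ₗ LinearMap.mulLeft k g) with hR'def
  have hgR' : R (g * z) = g * R' z := rCont_g_mul lam g z hcg
  have hR : R (g * (xi * z)) =
      g * xi * R' z + (lam (g * xi) • R z - lam (g * xi) • R' z) := by
    rw [hRdef, rCont_g_mul lam g (xi * z) hcg, rCont_x_mul _ g xi z hcx,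
      lam_comp_mulLeft_gx lam g xi F2, rCont_smul_sub, mul_add, ← mul_assoc g xi,
      ← mul_assoc g g, hgg, one_mul]
  rw [hR, add_mul, sub_mul, smul_mul_assoc, smul_mul_assoc, map_add, map_sub, map_smul, map_smul,
    mul_assoc (g * xi)]
  rw [F2 (R' z * y), ← mul_assoc g (R' z) y, ← hgR', ← hgz y, ← hz y]
  have hF2z := F2 z
  rw [mul_assoc] at hF2z
  rw [hF2z]
  simp only [smul_eq_mul]
  ring
end steps

/-- Theorem 4.1.3: every partial action of the Nichols Hopf algebra `H_{2^n}` on its base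
field `k` is symmetric: every linear map `λ : H_{2^n} → k` with `λ(1) = 1` and
`λ(h)λ(y) = Σ λ(h₁)λ(h₂y)` for all `h, y` also satisfies `λ(h)λ(y) = Σ λ(h₁y)λ(h₂)`
for all `h, y`. -/
theorem thm_4_1_3 {k H : Type*} [Field k] [Ring H] [HopfAlgebra k H]
    {n : ℕ} (hn : 2 ≤ n) (hchar : ringChar k ≠ 2)
    (N : NicholsData k n H) (lam : H →ₗ[k] k)
    (hlam : IsPartialAction k H lam) :
    IsSymmPartialAction k H lam := by
  obtain ⟨hl1, hl2⟩ := hlam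
  set g := N.g with hgdef
  have hgg : g * g = 1 := by
    have := N.g_sq; rwa [pow_two] at this
  -- comultiplication of g * x i
  have hcgx : ∀ i, Coalgebra.comul (R := k) (g * N.x i)
      = (g * N.x i) ⊗ₜ[k] g + (1 : H) ⊗ₜ[k] (g * N.x i) := by
    intro i
    rw [Bialgebra.comul_mul, N.comul_g, N.comul_x i, mul_add,
      Algebra.TensorProduct.tmul_mul_tmul, Algebra.TensorProduct.tmul_mul_tmul, mul_one, hgg]
  have hlCgx : ∀ i, lCont k H lam (g * N.x i) = lam (g * N.x i) • g + g * N.x i := by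
    intro i
    rw [lCont_apply, hcgx i]
    simp [TensorProduct.lid_tmul, hl1]
  -- F4 : λ(g)λ(y) = λ(g)λ(gy)
  have F4 : ∀ y, lam g * lam y = lam g * lam (g * y) := by
    intro y
    have h := hl2 g y
    rwa [lCont_grouplike lam g N.comul_g, smul_mul_assoc, map_smul, smul_eq_mul] at h
  -- F2 : λ((g xi) y) = λ(g xi) λ(y) − λ(g xi) λ(g y)
  have F2 : ∀ i y, lam (g * N.x i * y)
      = lam (g * N.x i) * lam y - lam (g * N.x i) * lam (g * y) := by
    intro i y
    have h := hl2 (g * N.x i) y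
    rw [hlCgx i, add_mul, smul_mul_assoc, map_add, map_smul, smul_eq_mul, mul_assoc] at h
    rw [← mul_assoc] at h
    linear_combination -h
  -- F3 : λ(xi y) = λ(g xi) λ(y) − λ(g xi) λ(g y)
  have F3 : ∀ i y, lam (N.x i * y)
      = lam (g * N.x i) * lam y - lam (g * N.x i) * lam (g * y) := by
    intro i y
    have key : N.x i * y = -((g * N.x i) * (g * y)) := by
      have h1 : g * N.x i * g = -(N.x i) := by
        rw [mul_assoc, N.x_mul_g i, mul_neg, ← mul_assoc, hgg, one_mul]
      rw [← mul_assoc, h1, neg_mul, neg_neg]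
    rw [key, map_neg, F2 i (g * y), ← mul_assoc g g y, hgg, one_mul]
    ring
  -- the property to be established
  set P : H → Prop := fun z => ∀ y, lam z * lam y = lam (rCont k H lam z * y) with hPdef
  have hP1 : P 1 := by
    intro y
    rw [hl1, one_mul, rCont_one, hl1, one_smul, one_mul]
  have hPg : P g := by
    intro y
    rw [rCont_grouplike lam g N.comul_g, smul_mul_assoc, map_smul, smul_eq_mul]
    exact F4 y
  have hlist : ∀ (f : Fin (n - 1) → Fin 2) (l : List (Fin (n - 1))),
      P ((l.map fun i => N.x i ^ ((f i : ℕ))).prod) ∧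
        P (g * (l.map fun i => N.x i ^ ((f i : ℕ))).prod) := by
    intro f l
    induction l with
    | nil =>
        simp only [List.map_nil, List.prod_nil, mul_one]
        exact ⟨hP1, hPg⟩
    | cons i t ih =>
        simp only [List.map_cons, List.prod_cons]
        have hfi : ((f i : ℕ)) = 0 ∨ ((f i : ℕ)) = 1 := by omega
        rcases hfi with h | h
        · rw [h, pow_zero, one_mul]; exact ih
        · rw [h, pow_one]
          exact ⟨step1 lam g (N.x i) N.comul_g (N.comul_x i) (F3 i) _ ih.1 ih.2,
            step2 lam g (N.x i) hgg N.comul_g (N.comul_x i) (F2 i) _ ih.1 ih.2⟩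
  have hbasis : ∀ p : Fin 2 × (Fin (n - 1) → Fin 2), P (N.basis p) := by
    rintro ⟨a, f⟩
    rw [N.basis_eq ⟨a, f⟩]
    have hl := hlist f (List.finRange (n - 1))
    have ha : ((a : ℕ)) = 0 ∨ ((a : ℕ)) = 1 := by omega
    rcases ha with h | h
    · rw [h, pow_zero, one_mul]; exact hl.1
    · rw [h, pow_one]; exact hl.2
  have hall : ∀ h : H, P h := by
    intro h
    have hh : h ∈ Submodule.span k (Set.range N.basis) := by
      rw [N.basis.span_eq]; trivial
    refine Submodule.span_induction (p := fun z _ => P z) ?_ ?_ ?_ ?_ hh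
    · rintro _ ⟨p, rfl⟩; exact hbasis p
    · intro y; simp
    · intro u v _ _ hu hv y
      rw [map_add, map_add, add_mul, add_mul, map_add, hu y, hv y]
    · intro c u _ hu y
      rw [map_smul, map_smul, smul_mul_assoc, smul_mul_assoc, map_smul, smul_eq_mul,
        smul_eq_mul, hu y]
  exact ⟨⟨hl1, hl2⟩, fun h y => hall h y⟩
end

section
/- The algebra map ψ : H_{2^n} → (H_{2^n})* determined by ψ(g) = 1* − g* and ψ(x_i) = x_i* − (g x_i)* for all i ∈ {1, …, n−1} (where (H_{2^n})* carries the convolution product) is an isomorphism of Hopf algebras; concretely, ψ is bijective, ψ(hh') = ψ(h) * ψ(h') and ψ(1) = ε for all h, h' ∈ H_{2^n}, and for all h, c, c' ∈ H_{2^n} one has ψ(h)(cc') = Σ ψ(h₁)(c)·ψ(h₂)(c') and ψ(h)(1) = ε(h). (Lemma 4.2.1) -/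
open scoped TensorProduct

/-- The convolution product on the dual `H* = H →ₗ[k] k` of a coalgebra:
`(f * f')(c) = Σ f(c₁) f'(c₂)`. -/
noncomputable def conv (k H : Type*) [CommSemiring k] [Semiring H] [Bialgebra k H]
    (f f' : H →ₗ[k] k) : H →ₗ[k] k :=
  LinearMap.mul' k k ∘ₗ TensorProduct.map f f' ∘ₗ Coalgebra.comul

namespace NicholsData

variable {k H : Type*} [Field k] [Ring H] [HopfAlgebra k H] {n : ℕ}
variable (N : NicholsData k n H)

lemma fin2 (e : Fin 2) : e = 0 ∨ e = 1 := by omega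

noncomputable def chi : H →ₗ[k] k := N.basis.coord (0,0) - N.basis.coord (1,0)

noncomputable def phi (i : Fin (n-1)) : H →ₗ[k] k :=
  N.basis.coord (0, Pi.single i 1) - N.basis.coord (1, Pi.single i 1)

def Qf (l : List (Fin (n-1))) (L : Fin (n-1) → Fin 2) : H :=
  (l.map (fun i => N.x i ^ ((L i : ℕ)))).prod

lemma coord_basis (p q : Fin 2 × (Fin (n-1) → Fin 2)) :
    N.basis.coord p (N.basis q) = if q = p then 1 else 0 := by
  rw [Module.Basis.coord_apply, Module.Basis.repr_self, Finsupp.single_apply]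

@[simp] lemma Qf_nil (L) : N.Qf [] L = 1 := rfl

lemma Qf_cons (t l L) : N.Qf (t :: l) L = N.x t ^ ((L t : ℕ)) * N.Qf l L := by
  simp [Qf]

lemma Qf_append (l₁ l₂ : List (Fin (n-1))) (L) :
    N.Qf (l₁ ++ l₂) L = N.Qf l₁ L * N.Qf l₂ L := by
  simp [Qf]

lemma Qf_congr {l : List (Fin (n-1))} {L L'} (h : ∀ t ∈ l, L t = L' t) :
    N.Qf l L = N.Qf l L' := by
  unfold Qf
  congr 1
  exact List.map_congr_left fun t ht => by rw [h t ht]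

lemma Qf_zero (l) : N.Qf l (0 : Fin (n-1) → Fin 2) = 1 := by
  unfold Qf
  apply List.prod_eq_one
  intro a ha
  rcases List.mem_map.1 ha with ⟨t, _, rfl⟩
  simp

lemma basis_apply (b : Fin 2) (L : Fin (n-1) → Fin 2) :
    N.basis (b, L) = N.g ^ (b : ℕ) * N.Qf (List.finRange (n-1)) L := N.basis_eq _

lemma split (j : Fin (n-1)) : ∃ l₁ l₂ : List (Fin (n-1)),
    List.finRange (n-1) = l₁ ++ j :: l₂ ∧ (∀ t ∈ l₁, t ≠ j) ∧ (∀ t ∈ l₂, t ≠ j) := by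
  have hlen : (j : ℕ) < (List.finRange (n-1)).length := by
    rw [List.length_finRange]; exact j.isLt
  refine ⟨(List.finRange (n-1)).take j, (List.finRange (n-1)).drop (j+1), ?_, ?_, ?_⟩
  · conv_lhs => rw [← List.take_append_drop (j : ℕ) (List.finRange (n-1))]
    rw [List.drop_eq_getElem_cons hlen]
    simp
  · intro t ht
    have pw := List.pairwise_lt_finRange (n-1)
    conv at pw => rw [← List.take_append_drop (j : ℕ) (List.finRange (n-1)),
      List.drop_eq_getElem_cons hlen]
    rw [List.pairwise_append] at pw
    have hj : (List.finRange (n-1))[(j:ℕ)]'hlen = j := by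
      apply Fin.ext; simp [List.getElem_finRange]
    have := pw.2.2 t ht ((List.finRange (n-1))[(j:ℕ)]'hlen) (by exact List.mem_cons_self)
    rw [hj] at this
    exact ne_of_lt this
  · intro t ht
    have pw := List.pairwise_lt_finRange (n-1)
    conv at pw => rw [← List.take_append_drop (j : ℕ) (List.finRange (n-1)),
      List.drop_eq_getElem_cons hlen]
    rw [List.pairwise_append] at pw
    have hj : (List.finRange (n-1))[(j:ℕ)]'hlen = j := by
      apply Fin.ext; simp [List.getElem_finRange]
    have := (List.pairwise_cons.1 pw.2.1).1 t ht
    rw [hj] at this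
    exact fun h => absurd (h ▸ this) (lt_irrefl _)

end NicholsData
namespace NicholsData

variable {k H : Type*} [Field k] [Ring H] [HopfAlgebra k H] {n : ℕ}
variable (N : NicholsData k n H)

lemma x_pow_comm (j t : Fin (n-1)) (e : Fin 2) :
    N.x j * N.x t ^ (e : ℕ) = (-1:k)^(e : ℕ) • (N.x t ^ (e : ℕ) * N.x j) := by
  rcases fin2 e with rfl | rfl
  · simp
  · simp only [Fin.val_one, pow_one, neg_smul, one_smul]
    rw [N.x_mul_x j t]

def Ssum (l : List (Fin (n-1))) (L : Fin (n-1) → Fin 2) : ℕ :=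
  (l.map fun t => ((L t : ℕ))).sum

lemma Ssum_zero_of (l : List (Fin (n-1))) {L : Fin (n-1) → Fin 2} (h : ∀ t ∈ l, L t = 0) : Ssum l L = 0 := by
  unfold Ssum
  apply List.sum_eq_zero
  intro a ha
  rcases List.mem_map.1 ha with ⟨t, ht, rfl⟩
  rw [h t ht]; rfl

lemma x_Qf_comm (j : Fin (n-1)) (l : List (Fin (n-1))) (L) :
    N.x j * N.Qf l L = (-1:k)^(Ssum l L) • (N.Qf l L * N.x j) := by
  induction l with
  | nil => simp [Ssum]
  | cons t l ih =>
      have hs : Ssum (t :: l) L = ((L t : ℕ)) + Ssum l L := by simp [Ssum]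
      rw [N.Qf_cons, ← mul_assoc, N.x_pow_comm j t (L t), smul_mul_assoc, mul_assoc, ih,
        mul_smul_comm, smul_smul, ← pow_add, hs]
      rw [← mul_assoc]

lemma x_g_pow_comm (j : Fin (n-1)) (b : Fin 2) :
    N.x j * N.g ^ (b : ℕ) = (-1:k)^(b : ℕ) • (N.g ^ (b : ℕ) * N.x j) := by
  rcases fin2 b with rfl | rfl
  · simp
  · simp only [Fin.val_one, pow_one, neg_smul, one_smul]
    rw [N.x_mul_g j]

lemma g_mul_basis (b : Fin 2) (L) :
    N.g * N.basis (b, L) = N.basis (b + 1, L) := by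
  rcases fin2 b with rfl | rfl
  · rw [N.basis_apply, N.basis_apply]
    have h1 : (((0:Fin 2) + 1 : Fin 2) : ℕ) = 1 := rfl
    have h0 : (((0:Fin 2)) : ℕ) = 0 := rfl
    rw [h1, h0, pow_zero, pow_one, one_mul]
  · rw [N.basis_apply, N.basis_apply]
    have h1 : (((1:Fin 2) + 1 : Fin 2) : ℕ) = 0 := rfl
    have h0 : (((1:Fin 2)) : ℕ) = 1 := rfl
    rw [h1, h0, pow_zero, pow_one, one_mul, ← mul_assoc, ← sq, N.g_sq, one_mul]

lemma x_mul_basis_one (j : Fin (n-1)) (b : Fin 2) {L} (hL : L j = 1) :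
    N.x j * N.basis (b, L) = 0 := by
  obtain ⟨l₁, l₂, hsp, h1, _⟩ := split j
  rw [N.basis_apply, hsp, N.Qf_append, N.Qf_cons, ← mul_assoc, N.x_g_pow_comm j b,
    smul_mul_assoc, mul_assoc]
  rw [show N.x j * (N.Qf l₁ L * (N.x j ^ ((L j : ℕ)) * N.Qf l₂ L)) = 0 from ?_]
  · simp
  · rw [← mul_assoc, N.x_Qf_comm j l₁ L, smul_mul_assoc, hL]
    simp only [Fin.val_one, pow_one]
    rw [mul_assoc, ← mul_assoc (N.x j), ← sq, N.x_sq]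
    simp

lemma x_mul_basis_zero (j : Fin (n-1)) (b : Fin 2) {L} (hL : L j = 0) :
    ∃ s : ℕ, (L = 0 → s = 0) ∧
      N.x j * N.basis (b, L) =
        ((-1:k)^((b : ℕ) + s)) • N.basis (b, Function.update L j 1) := by
  obtain ⟨l₁, l₂, hsp, h1, h2⟩ := split j
  refine ⟨Ssum l₁ L, fun h => Ssum_zero_of l₁ (by simp [h]), ?_⟩
  rw [N.basis_apply, N.basis_apply, hsp, N.Qf_append, N.Qf_cons, ← mul_assoc,
    N.x_g_pow_comm j b, smul_mul_assoc, mul_assoc, ← mul_assoc (N.x j),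
    N.x_Qf_comm j l₁ L, smul_mul_assoc, mul_smul_comm, smul_smul, ← pow_add]
  congr 1
  have e1 : N.Qf l₁ (Function.update L j 1) = N.Qf l₁ L :=
    N.Qf_congr fun t ht => Function.update_of_ne (h1 t ht) _ _
  have e2 : N.Qf l₂ (Function.update L j 1) = N.Qf l₂ L :=
    N.Qf_congr fun t ht => Function.update_of_ne (h2 t ht) _ _
  simp [N.Qf_append, N.Qf_cons, e1, e2, hL, Function.update_self, mul_assoc]

lemma one_eq : (1 : H) = N.basis (0, 0) := by
  rw [N.basis_apply]
  simp [N.Qf_zero]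

lemma g_eq : N.g = N.basis (1, 0) := by
  rw [N.basis_apply]
  simp [N.Qf_zero]

lemma x_eq (i : Fin (n-1)) : N.x i = N.basis (0, Pi.single i 1) := by
  obtain ⟨l₁, l₂, hsp, h1, h2⟩ := split i
  rw [N.basis_apply, hsp, N.Qf_append, N.Qf_cons]
  have e1 : N.Qf l₁ (Pi.single i 1) = 1 := by
    rw [N.Qf_congr (L' := 0) fun t ht => Pi.single_eq_of_ne (h1 t ht) _, N.Qf_zero]
  have e2 : N.Qf l₂ (Pi.single i 1) = 1 := by
    rw [N.Qf_congr (L' := 0) fun t ht => Pi.single_eq_of_ne (h2 t ht) _, N.Qf_zero]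
  rw [e1, e2]
  simp [Pi.single_eq_same]

lemma gx_eq (i : Fin (n-1)) : N.g * N.x i = N.basis (1, Pi.single i 1) := by
  rw [N.x_eq i, N.g_mul_basis]
  norm_num

lemma single_ne_zero' (i : Fin (n-1)) : (Pi.single i 1 : Fin (n-1) → Fin 2) ≠ 0 := by
  intro h
  have := congrFun h i
  simp [Pi.single_eq_same] at this

lemma update_ne_zero (j : Fin (n-1)) (L : Fin (n-1) → Fin 2) :
    Function.update L j 1 ≠ 0 := by
  intro h
  have := congrFun h j
  simp [Function.update_self] at this

lemma update_eq_single {j i : Fin (n-1)} {L : Fin (n-1) → Fin 2} (hL : L j = 0)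
    (h : Function.update L j 1 = Pi.single i 1) : i = j ∧ L = 0 := by
  have hj := congrFun h j
  rw [Function.update_self] at hj
  have hij : i = j := by
    by_contra hne
    rw [Pi.single_eq_of_ne (fun hh => hne hh.symm) _] at hj
    exact absurd hj (by decide)
  subst hij
  refine ⟨rfl, funext fun t => ?_⟩
  by_cases ht : t = i
  · subst ht; exact hL
  · have := congrFun h t
    rw [Function.update_of_ne ht, Pi.single_eq_of_ne ht] at this
    exact this

lemma chi_basis (b : Fin 2) (L) :
    N.chi (N.basis (b, L)) = if L = 0 then ((-1:k)^(b : ℕ)) else 0 := by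
  unfold chi
  rcases fin2 b with rfl | rfl <;>
    simp only [LinearMap.sub_apply, N.coord_basis, Prod.mk.injEq] <;>
    by_cases hL : L = 0 <;> simp [hL]

lemma phi_basis (i : Fin (n-1)) (b : Fin 2) (L) :
    N.phi i (N.basis (b, L)) = if L = Pi.single i 1 then ((-1:k)^(b : ℕ)) else 0 := by
  unfold phi
  rcases fin2 b with rfl | rfl <;>
    simp only [LinearMap.sub_apply, N.coord_basis, Prod.mk.injEq] <;>
    by_cases hL : L = Pi.single i 1 <;> simp [hL]

lemma counit_basis (b : Fin 2) (L) :
    Coalgebra.counit (R := k) (N.basis (b, L)) = if L = 0 then 1 else 0 := by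
  rw [N.basis_apply, Bialgebra.counit_mul]
  have hg : Coalgebra.counit (R := k) (N.g ^ (b : ℕ)) = 1 := by
    rcases fin2 b with rfl | rfl
    · simp
    · simpa using N.counit_g
  rw [hg, one_mul]
  by_cases hL : L = 0
  · subst hL
    rw [N.Qf_zero]
    simp
  · rw [if_neg hL]
    obtain ⟨i, hi⟩ : ∃ i, L i = 1 := by
      rcases Function.ne_iff.1 hL with ⟨i, hi⟩
      rcases fin2 (L i) with h | h
      · exact absurd h hi
      · exact ⟨i, h⟩
    obtain ⟨l₁, l₂, hsp, _, _⟩ := split i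
    rw [hsp, N.Qf_append, N.Qf_cons, Bialgebra.counit_mul, Bialgebra.counit_mul, hi]
    simp [N.counit_x i]

lemma adjoin_eq_top : Algebra.adjoin k (insert N.g (Set.range N.x)) = ⊤ := by
  rw [eq_top_iff]
  intro h _
  have hb : ∀ p, N.basis p ∈ Algebra.adjoin k (insert N.g (Set.range N.x)) := by
    rintro ⟨b, L⟩
    rw [N.basis_apply]
    refine mul_mem (pow_mem (Algebra.subset_adjoin (Set.mem_insert _ _)) _) ?_
    apply Subalgebra.list_prod_mem
    intro a ha
    rcases List.mem_map.1 ha with ⟨t, _, rfl⟩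
    exact pow_mem (Algebra.subset_adjoin (Set.mem_insert_of_mem _ (Set.mem_range_self t))) _
  have : h = ∑ p, N.basis.repr h p • N.basis p := (N.basis.sum_repr h).symm
  rw [this]
  exact sum_mem fun p _ => Subalgebra.smul_mem _ (hb p) _

lemma induction {p : H → Prop} (halg : ∀ r : k, p (algebraMap k H r))
    (hg : p N.g) (hx : ∀ i, p (N.x i))
    (hadd : ∀ a b, p a → p b → p (a + b))
    (hmul : ∀ a b, p a → p b → p (a * b)) (h : H) : p h := by
  have hmem : h ∈ Algebra.adjoin k (insert N.g (Set.range N.x)) := by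
    rw [N.adjoin_eq_top]; trivial
  refine Algebra.adjoin_induction (fun y hy => ?_) (fun r => halg r)
    (fun a b _ _ ha hb => hadd a b ha hb) (fun a b _ _ ha hb => hmul a b ha hb) hmem
  rcases hy with rfl | ⟨i, rfl⟩
  · exact hg
  · exact hx i

end NicholsData
namespace NicholsData

variable {k H : Type*} [Field k] [Ring H] [HopfAlgebra k H] {n : ℕ}
variable (N : NicholsData k n H)

lemma conv_of_eq {f f' : H →ₗ[k] k} {c : H} {ι : Type*} {s : Finset ι} {u v : ι → H}
    (h : Coalgebra.comul (R := k) c = ∑ i ∈ s, u i ⊗ₜ[k] v i) :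
    conv k H f f' c = ∑ i ∈ s, f (u i) * f' (v i) := by
  show (LinearMap.mul' k k) (TensorProduct.map f f' (Coalgebra.comul c)) = _
  rw [h, map_sum, map_sum]
  simp

lemma lCont_of_eq {lam : H →ₗ[k] k} {c : H} {ι : Type*} {s : Finset ι} {u v : ι → H}
    (h : Coalgebra.comul (R := k) c = ∑ i ∈ s, u i ⊗ₜ[k] v i) :
    lCont k H lam c = ∑ i ∈ s, lam (u i) • v i := by
  show (TensorProduct.lid k H) (TensorProduct.map lam LinearMap.id (Coalgebra.comul c)) = _
  rw [h, map_sum, map_sum]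
  simp

lemma comul_mul_eq {ι κ : Type*} (c d : H) (Rc : Coalgebra.Repr k c ι) (Rd : Coalgebra.Repr k d κ) :
    Coalgebra.comul (R := k) (c * d) = ∑ i ∈ Rc.index, ∑ j ∈ Rd.index,
      (Rc.left i * Rd.left j) ⊗ₜ[k] (Rc.right i * Rd.right j) := by
  rw [Bialgebra.comul_mul, ← Rc.eq, ← Rd.eq, Finset.sum_mul_sum]
  simp_rw [Algebra.TensorProduct.tmul_mul_tmul]

lemma lCont_counit_apply (a : H) : lCont k H (Coalgebra.counit (R := k)) a = a := by
  show (TensorProduct.lid k H)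
    (TensorProduct.map (Coalgebra.counit (R := k)) LinearMap.id (Coalgebra.comul a)) = a
  rw [show TensorProduct.map (Coalgebra.counit (R := k)) (LinearMap.id (M := H)) =
    LinearMap.rTensor H (Coalgebra.counit (R := k)) from rfl,
    Coalgebra.rTensor_counit_comul]
  simp

lemma chi_one : N.chi (1 : H) = 1 := by
  rw [N.one_eq, N.chi_basis]
  simp

lemma chi_g : N.chi N.g = -1 := by
  rw [N.g_eq, N.chi_basis]
  simp

lemma chi_x (i : Fin (n-1)) : N.chi (N.x i) = 0 := by
  rw [N.x_eq, N.chi_basis, if_neg (single_ne_zero' i)]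

lemma phi_one (i : Fin (n-1)) : N.phi i (1 : H) = 0 := by
  rw [N.one_eq, N.phi_basis, if_neg (Ne.symm (single_ne_zero' i))]

lemma phi_g (i : Fin (n-1)) : N.phi i N.g = 0 := by
  rw [N.g_eq, N.phi_basis, if_neg (Ne.symm (single_ne_zero' i))]

lemma single_eq_single_iff (i j : Fin (n-1)) :
    (Pi.single j 1 : Fin (n-1) → Fin 2) = Pi.single i 1 ↔ i = j := by
  constructor
  · intro h
    have := congrFun h j
    rw [Pi.single_eq_same] at this
    by_contra hne
    rw [Pi.single_eq_of_ne (fun hh => hne hh.symm) _] at this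
    exact absurd this (by decide)
  · rintro rfl; rfl

lemma phi_x (i j : Fin (n-1)) : N.phi i (N.x j) = if i = j then 1 else 0 := by
  rw [N.x_eq, N.phi_basis]
  by_cases h : i = j
  · rw [if_pos ((single_eq_single_iff i j).2 h), if_pos h]
    norm_num
  · rw [if_neg (fun hh => h ((single_eq_single_iff i j).1 hh)), if_neg h]

lemma chi_mul (c d : H) : N.chi (c * d) = N.chi c * N.chi d := by
  induction c using NicholsData.induction N generalizing d with
  | halg r =>
      rw [← Algebra.smul_def, map_smul, Algebra.algebraMap_eq_smul_one, map_smul,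
        smul_eq_mul, smul_eq_mul, N.chi_one, mul_one]
  | hg =>
      have key : N.chi ∘ₗ LinearMap.mulLeft k N.g = N.chi N.g • N.chi := by
        refine N.basis.ext fun p => ?_
        rcases p with ⟨b, L⟩
        rw [LinearMap.comp_apply, LinearMap.mulLeft_apply, N.g_mul_basis, N.chi_basis,
          LinearMap.smul_apply, N.chi_basis, N.chi_g, smul_eq_mul]
        rcases fin2 b with rfl | rfl <;> by_cases hL : L = 0 <;> simp [hL]
      have := LinearMap.congr_fun key d
      rw [LinearMap.comp_apply, LinearMap.mulLeft_apply] at this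
      rw [this, LinearMap.smul_apply, smul_eq_mul]
  | hx i =>
      have key : N.chi ∘ₗ LinearMap.mulLeft k (N.x i) = 0 := by
        refine N.basis.ext fun p => ?_
        rcases p with ⟨b, L⟩
        rw [LinearMap.comp_apply, LinearMap.mulLeft_apply]
        rcases fin2 (L i) with h | h
        · obtain ⟨s, _, hs⟩ := N.x_mul_basis_zero i b h
          rw [hs, map_smul, N.chi_basis, if_neg (update_ne_zero i L), smul_zero]
          rfl
        · rw [N.x_mul_basis_one i b h, map_zero]
          rfl
      have := LinearMap.congr_fun key d
      rw [LinearMap.comp_apply, LinearMap.mulLeft_apply] at this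
      rw [this, N.chi_x, zero_mul]
      rfl
  | hadd a b ha hb => rw [add_mul, map_add, map_add, ha d, hb d, add_mul]
  | hmul a b ha hb => rw [mul_assoc, ha (b*d), hb d, ha b, mul_assoc]

lemma phi_der (i : Fin (n-1)) (c d : H) :
    N.phi i (c * d) = N.phi i c * Coalgebra.counit (R := k) d + N.chi c * N.phi i d := by
  induction c using NicholsData.induction N generalizing d with
  | halg r =>
      rw [← Algebra.smul_def, map_smul, Algebra.algebraMap_eq_smul_one, map_smul, map_smul,
        N.phi_one, N.chi_one, smul_eq_mul, smul_eq_mul, smul_eq_mul]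
      ring
  | hg =>
      have key : N.phi i ∘ₗ LinearMap.mulLeft k N.g = -(N.phi i) := by
        refine N.basis.ext fun p => ?_
        rcases p with ⟨b, L⟩
        rw [LinearMap.comp_apply, LinearMap.mulLeft_apply, N.g_mul_basis, N.phi_basis,
          LinearMap.neg_apply, N.phi_basis]
        rcases fin2 b with rfl | rfl <;> by_cases hL : L = Pi.single i 1 <;> simp [hL]
      have := LinearMap.congr_fun key d
      rw [LinearMap.comp_apply, LinearMap.mulLeft_apply] at this
      rw [this, LinearMap.neg_apply, N.phi_g, N.chi_g, zero_mul, zero_add, neg_one_mul]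
  | hx j =>
      have key : N.phi i ∘ₗ LinearMap.mulLeft k (N.x j) =
          (if i = j then (1:k) else 0) • (Coalgebra.counit (R := k)) := by
        refine N.basis.ext fun p => ?_
        rcases p with ⟨b, L⟩
        rw [LinearMap.comp_apply, LinearMap.mulLeft_apply, LinearMap.smul_apply,
          N.counit_basis, smul_eq_mul]
        rcases fin2 (L j) with h | h
        · obtain ⟨s, hs0, hs⟩ := N.x_mul_basis_zero j b h
          rw [hs, map_smul, N.phi_basis, smul_eq_mul]
          by_cases hu : Function.update L j 1 = Pi.single i 1
          · obtain ⟨rfl, rfl⟩ := update_eq_single h hu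
            rw [hs0 rfl, add_zero, if_pos hu, ← pow_add]
            have hbb : ((b:ℕ) + (b:ℕ)) = 2 * (b:ℕ) := by ring
            rw [hbb, pow_mul]
            norm_num
          · rw [if_neg hu, mul_zero]
            by_cases hL : L = 0
            · subst hL
              have : Function.update (0 : Fin (n-1) → Fin 2) j 1 = Pi.single j 1 := rfl
              rw [this] at hu
              have : ¬ (i = j) := fun hh => hu (by rw [hh])
              simp [this]
            · simp [hL]
        · rw [N.x_mul_basis_one j b h, map_zero]
          have hL : L ≠ 0 := fun hh => by rw [hh] at h; simp at h
          simp [hL]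
      have := LinearMap.congr_fun key d
      rw [LinearMap.comp_apply, LinearMap.mulLeft_apply] at this
      rw [this, LinearMap.smul_apply, smul_eq_mul, N.phi_x, N.chi_x, zero_mul, add_zero]
  | hadd a b ha hb =>
      rw [add_mul, map_add, map_add, ha d, hb d, map_add]
      ring
  | hmul a b ha hb =>
      rw [mul_assoc, ha (b*d), hb d, N.chi_mul, Bialgebra.counit_mul, ha b]
      ring

end NicholsData
namespace NicholsData

variable {k H : Type*} [Field k] [Ring H] [HopfAlgebra k H] {n : ℕ}
variable (N : NicholsData k n H)

noncomputable def sgm : H →ₗ[k] H := lCont k H N.chi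

noncomputable def Dd (i : Fin (n-1)) : H →ₗ[k] H := lCont k H (N.phi i)

lemma sgm_eq : N.sgm = lCont k H N.chi := rfl

lemma Dd_eq (i : Fin (n-1)) : N.Dd i = lCont k H (N.phi i) := rfl

lemma sgm_mul (c d : H) : N.sgm (c * d) = N.sgm c * N.sgm d := by
  classical
  set Rc := Coalgebra.Repr.arbitrary k c with hRc
  set Rd := Coalgebra.Repr.arbitrary k d with hRd
  have h : Coalgebra.comul (R := k) (c*d) = ∑ p ∈ Rc.index ×ˢ Rd.index,
      (Rc.left p.1 * Rd.left p.2) ⊗ₜ[k] (Rc.right p.1 * Rd.right p.2) := by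
    rw [comul_mul_eq c d Rc Rd, Finset.sum_product]
  rw [N.sgm_eq, lCont_of_eq h, lCont_of_eq (lam := N.chi) Rc.eq.symm,
    lCont_of_eq (lam := N.chi) Rd.eq.symm]
  rw [Finset.sum_mul_sum, Finset.sum_product]
  apply Finset.sum_congr rfl
  intro i _
  apply Finset.sum_congr rfl
  intro j _
  rw [N.chi_mul, smul_mul_assoc, mul_smul_comm, smul_smul]

lemma Dd_der (i : Fin (n-1)) (c d : H) :
    N.Dd i (c * d) = N.Dd i c * d + N.sgm c * N.Dd i d := by
  classical
  set Rc := Coalgebra.Repr.arbitrary k c with hRc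
  set Rd := Coalgebra.Repr.arbitrary k d with hRd
  have h : Coalgebra.comul (R := k) (c*d) = ∑ p ∈ Rc.index ×ˢ Rd.index,
      (Rc.left p.1 * Rd.left p.2) ⊗ₜ[k] (Rc.right p.1 * Rd.right p.2) := by
    rw [comul_mul_eq c d Rc Rd, Finset.sum_product]
  have hd : lCont k H (Coalgebra.counit (R := k)) d
      = ∑ j ∈ Rd.index, Coalgebra.counit (R := k) (Rd.left j) • Rd.right j :=
    lCont_of_eq Rd.eq.symm
  rw [lCont_counit_apply d] at hd
  have expand : ∀ a j, N.phi i (Rc.left a * Rd.left j) • (Rc.right a * Rd.right j)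
      = (N.phi i (Rc.left a) • Rc.right a) *
          (Coalgebra.counit (R := k) (Rd.left j) • Rd.right j)
        + (N.chi (Rc.left a) • Rc.right a) * (N.phi i (Rd.left j) • Rd.right j) := by
    intro a j
    rw [N.phi_der, add_smul, smul_mul_assoc, mul_smul_comm, smul_smul,
      smul_mul_assoc, mul_smul_comm, smul_smul]
  rw [N.Dd_eq, N.sgm_eq, lCont_of_eq h, lCont_of_eq (lam := N.phi i) Rc.eq.symm,
    lCont_of_eq (lam := N.phi i) Rd.eq.symm, lCont_of_eq (lam := N.chi) Rc.eq.symm,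
    Finset.sum_product]
  simp_rw [expand, Finset.sum_add_distrib]
  rw [← Finset.sum_mul_sum, ← Finset.sum_mul_sum, ← hd]

lemma comul_one_eq : Coalgebra.comul (R := k) (1 : H) =
    ∑ i ∈ ({0} : Finset ℕ), (1:H) ⊗ₜ[k] (1:H) := by
  simp [Algebra.TensorProduct.one_def]

lemma sgm_one : N.sgm (1 : H) = 1 := by
  rw [N.sgm_eq, lCont_of_eq comul_one_eq, N.chi_one]
  simp

lemma comul_g_eq : Coalgebra.comul (R := k) N.g =
    ∑ i ∈ ({0} : Finset ℕ), N.g ⊗ₜ[k] N.g := by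
  simp [N.comul_g]

lemma sgm_g : N.sgm N.g = -N.g := by
  rw [N.sgm_eq, lCont_of_eq N.comul_g_eq, N.chi_g]
  simp

lemma comul_x_eq (j : Fin (n-1)) : Coalgebra.comul (R := k) (N.x j) =
    ∑ i ∈ ({0, 1} : Finset ℕ), (if i = 0 then N.x j else N.g) ⊗ₜ[k]
      (if i = 0 then (1:H) else N.x j) := by
  rw [N.comul_x j]; simp

lemma sgm_x (j : Fin (n-1)) : N.sgm (N.x j) = -N.x j := by
  rw [N.sgm_eq, lCont_of_eq (N.comul_x_eq j)]
  simp [N.chi_x, N.chi_g]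

lemma Dd_one (i : Fin (n-1)) : N.Dd i (1 : H) = 0 := by
  rw [N.Dd_eq, lCont_of_eq comul_one_eq, N.phi_one]
  simp

lemma Dd_g (i : Fin (n-1)) : N.Dd i N.g = 0 := by
  rw [N.Dd_eq, lCont_of_eq N.comul_g_eq, N.phi_g]
  simp

lemma Dd_x (i j : Fin (n-1)) : N.Dd i (N.x j) = if i = j then 1 else 0 := by
  rw [N.Dd_eq, lCont_of_eq (N.comul_x_eq j)]
  rw [show ∑ m ∈ ({0, 1} : Finset ℕ), N.phi i (if m = 0 then N.x j else N.g) •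
      (if m = 0 then (1:H) else N.x j) = N.phi i (N.x j) • (1:H) + N.phi i N.g • N.x j from by
    simp]
  rw [N.phi_x, N.phi_g, zero_smul, add_zero]
  by_cases h : i = j <;> simp [h]

lemma sgm_x_pow (t : Fin (n-1)) (e : Fin 2) :
    N.sgm (N.x t ^ (e : ℕ)) = (-1:k)^(e : ℕ) • N.x t ^ (e : ℕ) := by
  rcases fin2 e with rfl | rfl
  · simpa using N.sgm_one
  · simpa using N.sgm_x t

lemma sgm_Qf (l : List (Fin (n-1))) (L) :
    N.sgm (N.Qf l L) = (-1:k)^(Ssum l L) • N.Qf l L := by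
  induction l with
  | nil => simpa [Ssum] using N.sgm_one
  | cons t l ih =>
      have hs : Ssum (t :: l) L = ((L t : ℕ)) + Ssum l L := by simp [Ssum]
      rw [N.Qf_cons, N.sgm_mul, ih, N.sgm_x_pow, smul_mul_assoc, mul_smul_comm, smul_smul,
        ← pow_add, hs]

lemma Dd_Qf_not_mem (i : Fin (n-1)) (l : List (Fin (n-1))) (L) (h : i ∉ l) :
    N.Dd i (N.Qf l L) = 0 := by
  induction l with
  | nil => simpa using N.Dd_one i
  | cons t l ih =>
      have hti : i ≠ t := fun hh => h (by rw [hh]; exact List.mem_cons_self)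
      have hil : i ∉ l := fun hh => h (List.mem_cons_of_mem t hh)
      rw [N.Qf_cons, N.Dd_der, ih hil, mul_zero, add_zero]
      have hxt : N.Dd i (N.x t ^ ((L t : ℕ))) = 0 := by
        rcases fin2 (L t) with hh | hh <;> rw [hh]
        · simpa using N.Dd_one i
        · simpa [if_neg hti] using N.Dd_x i t
      rw [hxt, zero_mul]

lemma sgm_g_pow (b : Fin 2) : N.sgm (N.g ^ (b:ℕ)) = (-1:k)^(b:ℕ) • N.g ^ (b:ℕ) := by
  rcases fin2 b with rfl | rfl
  · simpa using N.sgm_one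
  · simpa using N.sgm_g

lemma Dd_g_pow (i : Fin (n-1)) (b : Fin 2) : N.Dd i (N.g ^ (b:ℕ)) = 0 := by
  rcases fin2 b with rfl | rfl
  · simpa using N.Dd_one i
  · simpa using N.Dd_g i

lemma Dd_basis_zero (i : Fin (n-1)) {L} (h : L i = 0) (b : Fin 2) :
    N.Dd i (N.basis (b, L)) = 0 := by
  obtain ⟨l₁, l₂, hsp, h1, h2⟩ := split i
  rw [N.basis_apply, N.Dd_der, N.Dd_g_pow, zero_mul, zero_add, hsp, N.Qf_append, N.Dd_der]
  rw [N.Dd_Qf_not_mem i l₁ L (fun hh => (h1 i hh) rfl), zero_mul, zero_add, N.Qf_cons,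
    N.Dd_der, N.Dd_Qf_not_mem i l₂ L (fun hh => (h2 i hh) rfl), mul_zero, add_zero, h]
  have : N.Dd i (N.x i ^ ((0 : Fin 2) : ℕ)) = 0 := by simpa using N.Dd_one i
  rw [this, zero_mul, mul_zero, mul_zero]

lemma Dd_basis_one (i : Fin (n-1)) {L} (h : L i = 1) :
    ∃ s : ℕ, ∀ b : Fin 2, N.Dd i (N.basis (b, L)) =
      ((-1:k)^((b : ℕ) + s)) • N.basis (b, Function.update L i 0) := by
  obtain ⟨l₁, l₂, hsp, h1, h2⟩ := split i
  refine ⟨Ssum l₁ L, fun b => ?_⟩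
  rw [N.basis_apply, N.Dd_der, N.Dd_g_pow, zero_mul, zero_add, hsp, N.Qf_append, N.Dd_der]
  rw [N.Dd_Qf_not_mem i l₁ L (fun hh => (h1 i hh) rfl), zero_mul, zero_add, N.Qf_cons,
    N.Dd_der, N.Dd_Qf_not_mem i l₂ L (fun hh => (h2 i hh) rfl), mul_zero, add_zero, h]
  have hdx : N.Dd i (N.x i ^ ((1 : Fin 2) : ℕ)) = 1 := by simpa using N.Dd_x i i
  rw [hdx, one_mul, N.sgm_Qf, N.sgm_g_pow]
  have e1 : N.Qf l₁ (Function.update L i 0) = N.Qf l₁ L :=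
    N.Qf_congr fun t ht => Function.update_of_ne (h1 t ht) _ _
  have e2 : N.Qf l₂ (Function.update L i 0) = N.Qf l₂ L :=
    N.Qf_congr fun t ht => Function.update_of_ne (h2 t ht) _ _
  rw [N.basis_apply, hsp, N.Qf_append, N.Qf_cons, e1, e2, Function.update_self]
  rw [smul_mul_assoc, smul_mul_assoc, mul_smul_comm, smul_smul, ← pow_add]
  congr 1
  simp [mul_assoc]

end NicholsData
namespace NicholsData

variable {k H : Type*} [Field k] [Ring H] [HopfAlgebra k H] {n : ℕ}
variable (N : NicholsData k n H)

noncomputable def Dl (l : List (Fin (n-1))) : H →ₗ[k] H :=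
  l.foldr (fun i f => f ∘ₗ N.Dd i) LinearMap.id

@[simp] lemma Dl_nil : N.Dl [] = LinearMap.id := rfl

lemma Dl_cons (i : Fin (n-1)) (l : List (Fin (n-1))) : N.Dl (i :: l) = N.Dl l ∘ₗ N.Dd i := rfl

lemma conv_lCont (lam f : H →ₗ[k] k) (a : H) :
    conv k H lam f a = f (lCont k H lam a) := by
  classical
  set R := Coalgebra.Repr.arbitrary k a
  rw [conv_of_eq R.eq.symm, lCont_of_eq (lam := lam) R.eq.symm, map_sum]
  simp

lemma Dl_basis (l : List (Fin (n-1))) (hl : l.Nodup) (L : Fin (n-1) → Fin 2) :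
    ((∀ t ∈ l, L t = 1) → ∃ c : k, c ≠ 0 ∧ ∀ b : Fin 2, N.Dl l (N.basis (b, L)) =
        ((-1:k)^((b : ℕ) * l.length) * c) •
          N.basis (b, fun t => if t ∈ l then 0 else L t)) ∧
    ((∃ t ∈ l, L t = 0) → ∀ b : Fin 2, N.Dl l (N.basis (b, L)) = 0) := by
  classical
  induction l generalizing L with
  | nil =>
      constructor
      · intro _
        refine ⟨1, one_ne_zero, fun b => ?_⟩
        have : (fun t => if t ∈ ([] : List (Fin (n-1))) then 0 else L t) = L := by
          funext t; simp
        rw [this]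
        simp
      · rintro ⟨t, ht, _⟩
        exact absurd ht (List.not_mem_nil)
  | cons i l ih =>
      rw [List.nodup_cons] at hl
      obtain ⟨hil, hnd⟩ := hl
      constructor
      · intro hall
        have hLi : L i = 1 := hall i (List.mem_cons_self)
        obtain ⟨s, hs⟩ := N.Dd_basis_one i hLi
        set L' := Function.update L i 0 with hL'
        have hall' : ∀ t ∈ l, L' t = 1 := by
          intro t ht
          have hti : t ≠ i := fun hh => hil (hh ▸ ht)
          rw [hL', Function.update_of_ne hti]
          exact hall t (List.mem_cons_of_mem i ht)
        obtain ⟨c', hc', hb'⟩ := (ih hnd L').1 hall'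
        refine ⟨(-1:k)^s * c', mul_ne_zero (pow_ne_zero _ (by norm_num)) hc', fun b => ?_⟩
        rw [N.Dl_cons, LinearMap.comp_apply, hs b, map_smul, hb' b, smul_smul]
        have hM : (fun t => if t ∈ l then 0 else L' t) =
            (fun t => if t ∈ (i :: l) then 0 else L t) := by
          funext t
          by_cases htl : t ∈ l
          · simp [htl]
          · by_cases hti : t = i
            · subst hti
              simp [htl, hL', Function.update_self]
            · simp [htl, hti, hL', Function.update_of_ne hti]
        rw [hM]
        congr 1
        rw [List.length_cons]
        ring
      · rintro ⟨t, ht, hLt⟩ b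
        rcases List.mem_cons.1 ht with rfl | htl
        · rw [N.Dl_cons, LinearMap.comp_apply, N.Dd_basis_zero t hLt, map_zero]
        · rcases fin2 (L i) with hLi | hLi
          · rw [N.Dl_cons, LinearMap.comp_apply, N.Dd_basis_zero i hLi, map_zero]
          · obtain ⟨s, hs⟩ := N.Dd_basis_one i hLi
            rw [N.Dl_cons, LinearMap.comp_apply, hs b, map_smul]
            have hti : t ≠ i := fun hh => hil (hh ▸ htl)
            have : Function.update L i 0 t = 0 :=
              (Function.update_of_ne hti _ _).trans hLt
            rw [(ih hnd _).2 ⟨t, htl, this⟩ b, smul_zero]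

end NicholsData
namespace NicholsData

variable {k H : Type*} [Field k] [Ring H] [HopfAlgebra k H] {n : ℕ}
variable (N : NicholsData k n H) (ψ : H →ₗ[k] (H →ₗ[k] k))

lemma st5 (hψ1 : ψ 1 = Coalgebra.counit (R := k))
    (hψmul : ∀ h h' : H, ψ (h * h') = conv k H (ψ h) (ψ h'))
    (hψg : ψ N.g = N.chi) (hψx : ∀ i, ψ (N.x i) = N.phi i) :
    ∀ h : H, ψ h 1 = Coalgebra.counit (R := k) h := by
  intro h
  induction h using NicholsData.induction N with
  | halg r =>
      rw [Algebra.algebraMap_eq_smul_one, map_smul, map_smul, hψ1]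
      simp
  | hg => rw [hψg, N.chi_one, N.counit_g]
  | hx i => rw [hψx i, N.phi_one, N.counit_x]
  | hadd a b ha hb => rw [map_add, LinearMap.add_apply, ha, hb, map_add]
  | hmul a b ha hb =>
      rw [hψmul, conv_of_eq comul_one_eq, Bialgebra.counit_mul]
      simp [ha, hb]

lemma bigT (hψ1 : ψ 1 = Coalgebra.counit (R := k))
    (hψmul : ∀ h h' : H, ψ (h * h') = conv k H (ψ h) (ψ h'))
    (hψg : ψ N.g = N.chi) (hψx : ∀ i, ψ (N.x i) = N.phi i) :
    ∀ h c c' : H, ψ h (c * c') = conv k H (ψ.flip c) (ψ.flip c') h := by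
  intro h
  induction h using NicholsData.induction N with
  | halg r =>
      intro c c'
      rw [Algebra.algebraMap_eq_smul_one, map_smul, LinearMap.smul_apply, hψ1,
        map_smul, conv_of_eq comul_one_eq]
      simp [LinearMap.flip_apply, hψ1, Bialgebra.counit_mul, mul_comm]
  | hg =>
      intro c c'
      rw [hψg, N.chi_mul, conv_of_eq N.comul_g_eq]
      simp [LinearMap.flip_apply, hψg]
  | hx i =>
      intro c c'
      rw [hψx i, N.phi_der, conv_of_eq (N.comul_x_eq i)]
      simp [LinearMap.flip_apply, hψx i, hψg, hψ1]
  | hadd a b ha hb =>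
      intro c c'
      rw [map_add, LinearMap.add_apply, map_add, ha c c', hb c c']
  | hmul h h' ihh ihh' =>
      intro c c'
      classical
      set Rc := Coalgebra.Repr.arbitrary k c with hRcdef
      set Rd := Coalgebra.Repr.arbitrary k c' with hRddef
      set Rh := Coalgebra.Repr.arbitrary k h with hRhdef
      set Rh' := Coalgebra.Repr.arbitrary k h' with hRh'def
      have hcc : Coalgebra.comul (R := k) (c * c') = ∑ p ∈ Rc.index ×ˢ Rd.index,
          (Rc.left p.1 * Rd.left p.2) ⊗ₜ[k] (Rc.right p.1 * Rd.right p.2) := by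
        rw [comul_mul_eq c c' Rc Rd, Finset.sum_product]
      have hhh : Coalgebra.comul (R := k) (h * h') = ∑ q ∈ Rh.index ×ˢ Rh'.index,
          (Rh.left q.1 * Rh'.left q.2) ⊗ₜ[k] (Rh.right q.1 * Rh'.right q.2) := by
        rw [comul_mul_eq h h' Rh Rh', Finset.sum_product]
      rw [hψmul, conv_of_eq hcc, conv_of_eq hhh]
      simp only [LinearMap.flip_apply]
      have lhs_eq : ∀ p : (H × H) × (H × H),
          ψ h (Rc.left p.1 * Rd.left p.2) * ψ h' (Rc.right p.1 * Rd.right p.2)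
          = ∑ q ∈ Rh.index ×ˢ Rh'.index,
              (ψ (Rh.left q.1) (Rc.left p.1) * ψ (Rh.right q.1) (Rd.left p.2)) *
              (ψ (Rh'.left q.2) (Rc.right p.1) * ψ (Rh'.right q.2) (Rd.right p.2)) := by
        intro p
        rw [ihh (Rc.left p.1) (Rd.left p.2), ihh' (Rc.right p.1) (Rd.right p.2),
          conv_of_eq (f := ψ.flip (Rc.left p.1)) (f' := ψ.flip (Rd.left p.2)) Rh.eq.symm,
          conv_of_eq (f := ψ.flip (Rc.right p.1)) (f' := ψ.flip (Rd.right p.2)) Rh'.eq.symm,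
          Finset.sum_mul_sum, ← Finset.sum_product']
        simp only [LinearMap.flip_apply]
      have rhs_eq : ∀ q : (H × H) × (H × H),
          ψ (Rh.left q.1 * Rh'.left q.2) c * ψ (Rh.right q.1 * Rh'.right q.2) c'
          = ∑ p ∈ Rc.index ×ˢ Rd.index,
              (ψ (Rh.left q.1) (Rc.left p.1) * ψ (Rh'.left q.2) (Rc.right p.1)) *
              (ψ (Rh.right q.1) (Rd.left p.2) * ψ (Rh'.right q.2) (Rd.right p.2)) := by
        intro q
        rw [hψmul, hψmul,
          conv_of_eq (f := ψ (Rh.left q.1)) (f' := ψ (Rh'.left q.2)) Rc.eq.symm,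
          conv_of_eq (f := ψ (Rh.right q.1)) (f' := ψ (Rh'.right q.2)) Rd.eq.symm,
          Finset.sum_mul_sum, ← Finset.sum_product']
      rw [Finset.sum_congr rfl fun p _ => lhs_eq p, Finset.sum_congr rfl fun q _ => rhs_eq q,
        Finset.sum_comm]
      apply Finset.sum_congr rfl
      intro q _
      apply Finset.sum_congr rfl
      intro p _
      ring

lemma flip_g (hψ1 : ψ 1 = Coalgebra.counit (R := k))
    (hψmul : ∀ h h' : H, ψ (h * h') = conv k H (ψ h) (ψ h'))
    (hψg : ψ N.g = N.chi) (hψx : ∀ i, ψ (N.x i) = N.phi i) :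
    ∀ h : H, ψ h N.g = N.chi h := by
  intro h
  induction h using NicholsData.induction N with
  | halg r =>
      rw [Algebra.algebraMap_eq_smul_one, map_smul, map_smul, LinearMap.smul_apply, hψ1]
      simp [N.counit_g, N.chi_one]
  | hg => rw [hψg]
  | hx i => rw [hψx i, N.phi_g, N.chi_x]
  | hadd a b ha hb => rw [map_add, LinearMap.add_apply, ha, hb, map_add]
  | hmul a b ha hb =>
      rw [hψmul, conv_of_eq N.comul_g_eq, N.chi_mul, ← ha, ← hb]
      simp
  
lemma flip_x (hψ1 : ψ 1 = Coalgebra.counit (R := k))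
    (hψmul : ∀ h h' : H, ψ (h * h') = conv k H (ψ h) (ψ h'))
    (hψg : ψ N.g = N.chi) (hψx : ∀ i, ψ (N.x i) = N.phi i) (i : Fin (n-1)) :
    ∀ h : H, ψ h (N.x i) = N.phi i h := by
  intro h
  induction h using NicholsData.induction N with
  | halg r =>
      rw [Algebra.algebraMap_eq_smul_one, map_smul, map_smul, LinearMap.smul_apply, hψ1]
      simp [N.counit_x, N.phi_one]
  | hg => rw [hψg, N.chi_x, N.phi_g]
  | hx j =>
      rw [hψx j, N.phi_x, N.phi_x]
      simp [eq_comm]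
  | hadd a b ha hb => rw [map_add, LinearMap.add_apply, ha, hb, map_add]
  | hmul a b ha hb =>
      rw [hψmul, conv_of_eq (N.comul_x_eq i), N.phi_der]
      have h1 : ψ b 1 = Coalgebra.counit (R := k) b := N.st5 ψ hψ1 hψmul hψg hψx b
      have hg' : ψ a N.g = N.chi a := N.flip_g ψ hψ1 hψmul hψg hψx a
      simp [ha, hb, h1, hg']

lemma psi_symm (hψ1 : ψ 1 = Coalgebra.counit (R := k))
    (hψmul : ∀ h h' : H, ψ (h * h') = conv k H (ψ h) (ψ h'))
    (hψg : ψ N.g = N.chi) (hψx : ∀ i, ψ (N.x i) = N.phi i) :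
    ∀ c h : H, ψ h c = ψ c h := by
  intro c
  induction c using NicholsData.induction N with
  | halg r =>
      intro h
      simp only [Algebra.algebraMap_eq_smul_one, map_smul, LinearMap.smul_apply, hψ1]
      rw [N.st5 ψ hψ1 hψmul hψg hψx h]
  | hg => intro h; rw [hψg, N.flip_g ψ hψ1 hψmul hψg hψx h]
  | hx i => intro h; rw [hψx i, N.flip_x ψ hψ1 hψmul hψg hψx i h]
  | hadd a b ha hb =>
      intro h
      rw [map_add ψ a b, LinearMap.add_apply, ← ha h, ← hb h]
      exact map_add (ψ h) a b
  | hmul a b ha hb =>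
      intro h
      have hfa : ψ.flip a = ψ a := LinearMap.ext fun y => ha y
      have hfb : ψ.flip b = ψ b := LinearMap.ext fun y => hb y
      rw [N.bigT ψ hψ1 hψmul hψg hψx h a b, hfa, hfb, ← hψmul]

lemma prodX (hψmul : ∀ h h' : H, ψ (h * h') = conv k H (ψ h) (ψ h'))
    (hψx : ∀ i, ψ (N.x i) = N.phi i) :
    ∀ (l : List (Fin (n-1))) (y hh : H),
      ψ ((l.map N.x).prod * y) hh = ψ y (N.Dl l hh) := by
  intro l
  induction l with
  | nil => intro y hh; simp
  | cons i l ih =>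
      intro y hh
      rw [List.map_cons, List.prod_cons, mul_assoc, hψmul, hψx i, conv_lCont, ih y]
      rfl

lemma psi_inj (hchar : ringChar k ≠ 2)
    (hψ1 : ψ 1 = Coalgebra.counit (R := k))
    (hψmul : ∀ h h' : H, ψ (h * h') = conv k H (ψ h) (ψ h'))
    (hψg : ψ N.g = N.chi) (hψx : ∀ i, ψ (N.x i) = N.phi i) :
    Function.Injective ψ := by
  classical
  rw [← LinearMap.ker_eq_bot]
  rw [LinearMap.ker_eq_bot']
  intro h hψ0
  have hzero : ∀ c : H, ψ c h = 0 := by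
    intro c
    rw [← N.psi_symm ψ hψ1 hψmul hψg hψx c h, hψ0]
    rfl
  have key : ∀ (l : List (Fin (n-1))),
      Coalgebra.counit (R := k) (N.Dl l h) = 0 ∧ N.chi (N.Dl l h) = 0 := by
    intro l
    constructor
    · have h0 := hzero ((l.map N.x).prod * 1)
      rw [N.prodX ψ hψmul hψx l 1 h, hψ1] at h0
      exact h0
    · have h0 := hzero ((l.map N.x).prod * N.g)
      rw [N.prodX ψ hψmul hψx l N.g h, hψg] at h0
      exact h0
  have hsum : ∀ (F : H →ₗ[k] k), F h = ∑ p : Fin 2 × (Fin (n-1) → Fin 2),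
      N.basis.repr h p • F (N.basis p) := by
    intro F
    conv_lhs => rw [← N.basis.sum_repr h]
    rw [map_sum]
    simp
  have two_ne : (2 : k) ≠ 0 := Ring.two_ne_zero hchar
  have hrepr : ∀ p : Fin 2 × (Fin (n-1) → Fin 2), N.basis.repr h p = 0 := by
    rintro ⟨b, J⟩
    set l := (List.finRange (n-1)).filter (fun t => J t = 1) with hldef
    have hnd : l.Nodup := (List.nodup_finRange _).filter _
    have hmem : ∀ t, t ∈ l ↔ J t = 1 := by
      intro t
      rw [hldef, List.mem_filter]
      simp [List.mem_finRange]
    have hallJ : ∀ t ∈ l, J t = 1 := fun t ht => (hmem t).1 ht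
    obtain ⟨c, hc0, hcb⟩ := (N.Dl_basis l hnd J).1 hallJ
    have hM : (fun t => if t ∈ l then (0 : Fin 2) else J t) = (0 : Fin (n-1) → Fin 2) := by
      funext t
      by_cases ht : t ∈ l
      · simp [ht]
      · have hne : J t ≠ 1 := fun hh => ht ((hmem t).2 hh)
        rcases fin2 (J t) with h0 | h1
        · simp [ht, h0]
        · exact absurd h1 hne
    rw [hM] at hcb
    have hval1 : ∀ (b' : Fin 2) (L : Fin (n-1) → Fin 2),
        Coalgebra.counit (R := k) (N.Dl l (N.basis (b', L)))
        = if L = J then ((-1:k)^((b' : ℕ) * l.length) * c) else 0 := by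
      intro b' L
      by_cases hLJ : L = J
      · subst hLJ
        rw [if_pos rfl, hcb b', map_smul, N.counit_basis, if_pos rfl]
        simp
      · rw [if_neg hLJ]
        by_cases hall : ∀ t ∈ l, L t = 1
        · obtain ⟨cL, hcL0, hcbL⟩ := (N.Dl_basis l hnd L).1 hall
          have hML : (fun t => if t ∈ l then (0:Fin 2) else L t) ≠ (0 : Fin (n-1) → Fin 2) := by
            intro hM0
            apply hLJ
            funext t
            by_cases ht : t ∈ l
            · rw [hall t ht, hallJ t ht]
            · have h1 := congrFun hM0 t
              simp [ht] at h1
              have hne : J t ≠ 1 := fun hh => ht ((hmem t).2 hh)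
              rcases fin2 (J t) with h0 | hJ1
              · rw [h1, h0]
              · exact absurd hJ1 hne
          rw [hcbL b', map_smul, N.counit_basis, if_neg hML]
          simp
        · push_neg at hall
          obtain ⟨t, htl, hLt⟩ := hall
          have hLt0 : L t = 0 := by
            rcases fin2 (L t) with h0 | h1
            · exact h0
            · exact absurd h1 hLt
          rw [(N.Dl_basis l hnd L).2 ⟨t, htl, hLt0⟩ b', map_zero]
    have hval2 : ∀ (b' : Fin 2) (L : Fin (n-1) → Fin 2),
        N.chi (N.Dl l (N.basis (b', L)))
        = if L = J then ((-1:k)^((b' : ℕ) * l.length) * c * (-1:k)^(b' : ℕ)) else 0 := by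
      intro b' L
      by_cases hLJ : L = J
      · subst hLJ
        rw [if_pos rfl, hcb b', map_smul, N.chi_basis, if_pos rfl]
        simp [mul_comm]
      · rw [if_neg hLJ]
        by_cases hall : ∀ t ∈ l, L t = 1
        · obtain ⟨cL, hcL0, hcbL⟩ := (N.Dl_basis l hnd L).1 hall
          have hML : (fun t => if t ∈ l then (0:Fin 2) else L t) ≠ (0 : Fin (n-1) → Fin 2) := by
            intro hM0
            apply hLJ
            funext t
            by_cases ht : t ∈ l
            · rw [hall t ht, hallJ t ht]
            · have h1 := congrFun hM0 t
              simp [ht] at h1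
              have hne : J t ≠ 1 := fun hh => ht ((hmem t).2 hh)
              rcases fin2 (J t) with h0 | hJ1
              · rw [h1, h0]
              · exact absurd hJ1 hne
          rw [hcbL b', map_smul, N.chi_basis, if_neg hML]
          simp
        · push_neg at hall
          obtain ⟨t, htl, hLt⟩ := hall
          have hLt0 : L t = 0 := by
            rcases fin2 (L t) with h0 | h1
            · exact h0
            · exact absurd h1 hLt
          rw [(N.Dl_basis l hnd L).2 ⟨t, htl, hLt0⟩ b', map_zero]
    set A0 := N.basis.repr h (0, J) with hA0
    set A1 := N.basis.repr h (1, J) with hA1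
    have sumval : ∀ (v : Fin 2 → k),
        (∑ p : Fin 2 × (Fin (n-1) → Fin 2), N.basis.repr h p •
          (if p.2 = J then v p.1 else 0)) = A0 * v 0 + A1 * v 1 := by
      intro v
      rw [Fintype.sum_prod_type]
      have inner : ∀ b' : Fin 2, (∑ L : Fin (n-1) → Fin 2, N.basis.repr h (b', L) •
          (if L = J then v b' else 0)) = N.basis.repr h (b', J) * v b' := by
        intro b'
        rw [Finset.sum_eq_single J]
        · simp
        · intro L _ hLJ
          simp [hLJ]
        · intro hJ
          exact absurd (Finset.mem_univ J) hJ
      rw [Finset.sum_congr rfl fun b' _ => inner b', Fin.sum_univ_two]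
    have E1 : A0 * ((-1:k)^((0 : ℕ) * l.length) * c)
        + A1 * ((-1:k)^((1 : ℕ) * l.length) * c) = 0 := by
      have h0 : (Coalgebra.counit (R := k) ∘ₗ N.Dl l) h = 0 := (key l).1
      rw [hsum (Coalgebra.counit (R := k) ∘ₗ N.Dl l)] at h0
      simp only [LinearMap.comp_apply] at h0
      rw [Finset.sum_congr rfl (fun p _ => by rw [hval1 p.1 p.2])] at h0
      rw [sumval (fun b' => ((-1:k)^((b' : ℕ) * l.length) * c))] at h0
      simpa using h0
    have E2 : A0 * ((-1:k)^((0 : ℕ) * l.length) * c * (-1:k)^(0:ℕ))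
        + A1 * ((-1:k)^((1 : ℕ) * l.length) * c * (-1:k)^(1:ℕ)) = 0 := by
      have h0 : (N.chi ∘ₗ N.Dl l) h = 0 := (key l).2
      rw [hsum (N.chi ∘ₗ N.Dl l)] at h0
      simp only [LinearMap.comp_apply] at h0
      rw [Finset.sum_congr rfl (fun p _ => by rw [hval2 p.1 p.2])] at h0
      rw [sumval (fun b' => ((-1:k)^((b' : ℕ) * l.length) * c * (-1:k)^(b' : ℕ)))] at h0
      simpa using h0
    simp only [zero_mul, pow_zero, one_mul, pow_one, mul_one, mul_neg, neg_mul] at E1 E2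
    -- E1 : A0 * c + A1 * ((-1)^l.length * c) = 0
    -- E2 : A0 * c - A1 * ((-1)^l.length * c) = 0
    have hA0z : A0 * c * 2 = 0 := by linear_combination E1 + E2
    have hA0' : A0 = 0 := by
      rcases mul_eq_zero.1 hA0z with h' | h'
      · rcases mul_eq_zero.1 h' with h'' | h''
        · exact h''
        · exact absurd h'' hc0
      · exact absurd h' two_ne
    have hA1z : A1 * ((-1:k)^l.length * c) * 2 = 0 := by linear_combination E1 - E2
    have hA1' : A1 = 0 := by
      rcases mul_eq_zero.1 hA1z with h' | h'
      · rcases mul_eq_zero.1 h' with h'' | h''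
        · exact h''
        · exact absurd h'' (mul_ne_zero (pow_ne_zero _ (by norm_num)) hc0)
      · exact absurd h' two_ne
    rcases fin2 b with rfl | rfl
    · exact hA0'
    · exact hA1'
  have : N.basis.repr h = 0 := Finsupp.ext hrepr
  have hh : h = ∑ p : Fin 2 × (Fin (n-1) → Fin 2), N.basis.repr h p • N.basis p :=
    (N.basis.sum_repr h).symm
  rw [hh]
  simp [hrepr]

end NicholsData

/-- Lemma 4.2.1: the algebra map `ψ : H_{2^n} → (H_{2^n})*` determined by `ψ(g) = 1* − g*`
and `ψ(x_i) = x_i* − (g x_i)*` (the dual `(H_{2^n})*` carrying the convolution product, and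
`b*` denoting the dual basis functional `basis.coord`; `1 = g⁰`, `x_i` corresponding to the
exponent vector `Pi.single i 1`) is an isomorphism of Hopf algebras: `ψ` is bijective,
`ψ(h h') = ψ(h) * ψ(h')` and `ψ(1) = ε`, and for all `h, c, c'` one has
`ψ(h)(c c') = Σ ψ(h₁)(c)·ψ(h₂)(c')` and `ψ(h)(1) = ε(h)`. -/
theorem lemma_4_2_1 {k H : Type*} [Field k] [Ring H] [HopfAlgebra k H]
    {n : ℕ} (hn : 2 ≤ n) (hchar : ringChar k ≠ 2)
    (N : NicholsData k n H)
    (ψ : H →ₗ[k] (H →ₗ[k] k))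
    (hψ1 : ψ 1 = Coalgebra.counit (R := k))
    (hψmul : ∀ h h' : H, ψ (h * h') = conv k H (ψ h) (ψ h'))
    (hψg : ψ N.g = N.basis.coord (0, 0) - N.basis.coord (1, 0))
    (hψx : ∀ i : Fin (n - 1), ψ (N.x i) =
      N.basis.coord (0, Pi.single i 1) - N.basis.coord (1, Pi.single i 1)) :
    Function.Bijective ψ ∧
    ψ 1 = Coalgebra.counit (R := k) ∧
    (∀ h h' : H, ψ (h * h') = conv k H (ψ h) (ψ h')) ∧
    (∀ h c c' : H, ψ h (c * c') = conv k H (ψ.flip c) (ψ.flip c') h) ∧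
    (∀ h : H, ψ h 1 = Coalgebra.counit (R := k) h) := by
  have hψg' : ψ N.g = N.chi := hψg
  have hψx' : ∀ i, ψ (N.x i) = N.phi i := hψx
  have inj := N.psi_inj ψ hchar hψ1 hψmul hψg' hψx'
  have hfd : FiniteDimensional k H := Module.Finite.of_basis N.basis
  have hfr : Module.finrank k H = Module.finrank k (H →ₗ[k] k) :=
    (Subspace.dual_finrank_eq (K := k) (V := H)).symm
  exact ⟨⟨inj, (LinearMap.injective_iff_surjective_of_finrank_eq_finrank hfr).1 inj⟩,
    hψ1, hψmul, N.bigT ψ hψ1 hψmul hψg' hψx', N.st5 ψ hψ1 hψmul hψg' hψx'⟩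
end
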